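/- arXiv:2009.14121 — 5 statements merged into one kernel-verified Lean document; each statement's English description precedes it below -/
import Mathlib

section
/- Let G : ℕ → ℂ be multiplicative and let a, b, c ∈ ℕ with a = b·c, gcd(b,c) = 1, and w_{p,G} = ∞ for every prime p ∣ c. Then R_G(a,x) = Σ_{h ∣ c} G(h)·h·R_G(b, x/h) for every real x ≥ 0. Consequently, if R_G(b) converges, then R_G(a) converges and R_G(a) = D_G(c)·R_G(b). -/
open Filter Finset

noncomputable def mu (n : ℕ) : ℂ := ((ArithmeticFunction.moebius n : ℤ) : ℂ)

/-- Ramanujan sum `c_q(a) = ∑_{d ∣ gcd(q,a)} d · μ(q/d)` (Kluyver's formula). -/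
noncomputable def cR (q a : ℕ) : ℂ :=
  ∑ d ∈ (Nat.gcd q a).divisors, (d : ℂ) * mu (q / d)

/-- Partial sum of the Ramanujan series `R_G(a,x) = ∑_{q ≤ x} G(q) c_q(a)`. -/
noncomputable def RS (G : ℕ → ℂ) (a : ℕ) (x : ℝ) : ℂ :=
  ∑ q ∈ Finset.Icc 1 ⌊x⌋₊, G q * cR q a

/-- Partial sum of the coprime series `S_G(a,x) = ∑_{r ≤ x, (r,a)=1} G(r) μ(r)`. -/
noncomputable def SS (G : ℕ → ℂ) (a : ℕ) (x : ℝ) : ℂ :=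
  ∑ r ∈ (Finset.Icc 1 ⌊x⌋₊).filter fun r => Nat.gcd r a = 1, G r * mu r

/-- Partial sum of the Lucht series `L_G(d,x) = ∑_{K ≤ x} μ(K) G(dK)`. -/
noncomputable def LS (G : ℕ → ℂ) (d : ℕ) (x : ℝ) : ℂ :=
  ∑ K ∈ Finset.Icc 1 ⌊x⌋₊, mu K * G (d * K)

def RTendsto (G : ℕ → ℂ) (a : ℕ) (L : ℂ) : Prop :=
  Tendsto (fun x : ℝ => RS G a x) atTop (nhds L)

def RConv (G : ℕ → ℂ) (a : ℕ) : Prop := ∃ L, RTendsto G a L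

def STendsto (G : ℕ → ℂ) (a : ℕ) (L : ℂ) : Prop :=
  Tendsto (fun x : ℝ => SS G a x) atTop (nhds L)

def SConv (G : ℕ → ℂ) (a : ℕ) : Prop := ∃ L, STendsto G a L

def LTendsto (G : ℕ → ℂ) (d : ℕ) (L : ℂ) : Prop :=
  Tendsto (fun x : ℝ => LS G d x) atTop (nhds L)

def LConv (G : ℕ → ℂ) (d : ℕ) : Prop := ∃ L, LTendsto G d L

/-- `G` is multiplicative: `G(ab) = G(a)G(b)` for coprime positive `a, b`. -/
def IsMult (G : ℕ → ℂ) : Prop :=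
  ∀ a b : ℕ, 0 < a → 0 < b → Nat.Coprime a b → G (a * b) = G a * G b

/-- `G` is completely multiplicative. -/
def IsCM (G : ℕ → ℂ) : Prop :=
  ∀ a b : ℕ, 0 < a → 0 < b → G (a * b) = G a * G b

/-- The completely multiplicative index `w_{p,G}`: the largest `w ∈ ℕ` with
`G(p^k) = G(p)^k` for all `1 ≤ k ≤ w`, and `⊤` if this holds for all `k`. -/
noncomputable def cmIndex (G : ℕ → ℂ) (p : ℕ) : ℕ∞ :=
  ⨆ w ∈ {n : ℕ | ∀ k : ℕ, 1 ≤ k → k ≤ n → G (p ^ k) = G p ^ k}, (w : ℕ∞)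

/-- The transparency index `v_{p,G}`: least `K ≥ 0` with `G(p^{K+1}) ≠ 1`, or `⊤`. -/
noncomputable def trIdx (G : ℕ → ℂ) (p : ℕ) : ℕ∞ :=
  ⨅ K ∈ {K : ℕ | G (p ^ (K + 1)) ≠ 1}, (K : ℕ∞)

/-- A prime `p` is bad for `G` iff `1 ≤ |G(p)| ≤ p`. -/
def IsBad (G : ℕ → ℂ) (p : ℕ) : Prop :=
  1 ≤ ‖G p‖ ∧ ‖G p‖ ≤ p

def IsHyperbad (G : ℕ → ℂ) (p : ℕ) : Prop :=
  p.Prime ∧ IsBad G p ∧ cmIndex G p = ⊤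

def IsSimplyBad (G : ℕ → ℂ) (p : ℕ) : Prop :=
  p.Prime ∧ IsBad G p ∧ cmIndex G p ≠ ⊤

def IsSimplyTransparent (G : ℕ → ℂ) (p : ℕ) : Prop :=
  p.Prime ∧ G p = 1 ∧ cmIndex G p ≠ ⊤

/-- The Ramanujan conductor `N(G) = ∏_{p simply bad} p^{w_{p,G}}`. -/
noncomputable def ramCond (G : ℕ → ℂ) : ℕ :=
  ∏ᶠ p ∈ {p : ℕ | IsSimplyBad G p}, p ^ (cmIndex G p).toNat

/-- The transparency conductor `N_T(G) = ∏_{p simply transparent} p^{v_{p,G}}`. -/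
noncomputable def transpCond (G : ℕ → ℂ) : ℕ :=
  ∏ᶠ p ∈ {p : ℕ | IsSimplyTransparent G p}, p ^ (trIdx G p).toNat

/-- The squarefree radical of `n`. -/
def rad (n : ℕ) : ℕ := ∏ p ∈ n.primeFactors, p

/-- Euler–Ramanujan factor `E_G(a) = ∑_{d ∣ a·rad a} G(d) c_d(a)`. -/
noncomputable def EG (G : ℕ → ℂ) (a : ℕ) : ℂ := ∑ d ∈ (a * rad a).divisors, G d * cR d a

/-- `C_G(a) = ∑_{d ∣ a} G(d) μ(d)`. -/
noncomputable def CGsum (G : ℕ → ℂ) (a : ℕ) : ℂ := ∑ d ∈ a.divisors, G d * mu d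

/-- `D_G(a) = ∑_{d ∣ a} G(d) d`. -/
noncomputable def DGsum (G : ℕ → ℂ) (a : ℕ) : ℂ := ∑ d ∈ a.divisors, G d * (d : ℂ)

/-- `U_G(a) = ∑_{d ∣ a} μ(d) G(da)`. -/
noncomputable def UGsum (G : ℕ → ℂ) (a : ℕ) : ℂ := ∑ d ∈ a.divisors, mu d * G (d * a)

/-- Eratosthenes transform `F' = F ∗ μ`. -/
noncomputable def eratos (F : ℕ → ℂ) (n : ℕ) : ℂ := ∑ d ∈ n.divisors, F d * mu (n / d)

/-- The canonical Ramanujan coefficient of `F`: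
`G_F(q) = ∏_{p ∣ q} (1 - ∑_{K=0}^{v_p(q)-1} F'(p^K)/p^K)`. -/
noncomputable def canonCoeff (F : ℕ → ℂ) (q : ℕ) : ℂ :=
  ∏ p ∈ q.primeFactors,
    (1 - ∑ K ∈ Finset.range (q.factorization p), eratos F (p ^ K) / ((p : ℂ) ^ K))

/-- The opacity core `H_G(q) = G(q·N_T(G))·μ(q)²`. -/
noncomputable def opacityCore (G : ℕ → ℂ) (q : ℕ) : ℂ :=
  G (q * transpCond G) * mu q ^ 2

noncomputable def st14_muC : ArithmeticFunction ℂ :=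
  ((ArithmeticFunction.moebius : ArithmeticFunction ℤ) : ArithmeticFunction ℂ)

lemma st14_muC_apply (n : ℕ) : st14_muC n = mu n := by
  simp [st14_muC, mu, ArithmeticFunction.intCoe_apply]

lemma st14_muC_mult : st14_muC.IsMultiplicative :=
  ArithmeticFunction.isMultiplicative_moebius.intCast

noncomputable def st14_idDvd (a : ℕ) : ArithmeticFunction ℂ :=
  ⟨fun d => if d ∣ a then (d : ℂ) else 0, by simp⟩

lemma st14_idDvd_apply (a d : ℕ) : st14_idDvd a d = if d ∣ a then (d : ℂ) else 0 := rfl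

lemma st14_idDvd_mult (a : ℕ) : (st14_idDvd a).IsMultiplicative := by
  constructor
  · simp [st14_idDvd_apply]
  · intro m n hmn
    simp only [st14_idDvd_apply]
    by_cases h : m * n ∣ a
    · rw [if_pos h, if_pos (dvd_of_mul_right_dvd h), if_pos (dvd_of_mul_left_dvd h)]
      push_cast; ring
    · rw [if_neg h]
      by_cases hm : m ∣ a
      · rw [if_pos hm, if_neg (fun hn => h (Nat.Coprime.mul_dvd_of_dvd_of_dvd hmn hm hn)), mul_zero]
      · rw [if_neg hm, zero_mul]

noncomputable def st14_aG (G : ℕ → ℂ) : ArithmeticFunction ℂ :=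
  ⟨fun n => if n = 0 then 0 else G n, by simp⟩

lemma st14_aG_apply {G : ℕ → ℂ} {n : ℕ} (hn : n ≠ 0) : st14_aG G n = G n := if_neg hn

lemma st14_aG_mult {G : ℕ → ℂ} (hG : IsMult G) (h1 : G 1 = 1) : (st14_aG G).IsMultiplicative := by
  constructor
  · simpa [st14_aG] using h1
  · intro m n hmn
    rcases Nat.eq_zero_or_pos m with rfl | hm
    · have hn1 : n = 1 := Nat.coprime_zero_left n |>.mp hmn
      subst hn1; simp [st14_aG, h1]
    rcases Nat.eq_zero_or_pos n with rfl | hn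
    · simp [st14_aG]
    rw [st14_aG_apply (by positivity), st14_aG_apply hm.ne', st14_aG_apply hn.ne']
    exact hG m n hm hn hmn

-- Kluyver convolution identity
lemma st14_kluyver (a q : ℕ) (hq : q ≠ 0) : (st14_idDvd a * st14_muC) q = cR q a := by
  rw [ArithmeticFunction.mul_apply, Nat.sum_divisorsAntidiagonal (fun i j => st14_idDvd a i * st14_muC j)]
  have hset : (Nat.gcd q a).divisors = q.divisors.filter (· ∣ a) := by
    ext d
    simp only [Nat.mem_divisors, Finset.mem_filter]
    constructor
    · intro ⟨hd, _⟩
      exact ⟨⟨(Nat.dvd_gcd_iff.mp hd).1, hq⟩, (Nat.dvd_gcd_iff.mp hd).2⟩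
    · intro ⟨⟨h1, _⟩, h2⟩
      exact ⟨Nat.dvd_gcd h1 h2, fun h => hq (by simpa [h] using Nat.gcd_dvd_left q a)⟩
  rw [cR, hset, Finset.sum_filter]
  refine Finset.sum_congr rfl fun d _ => ?_
  rw [st14_idDvd_apply, st14_muC_apply, ite_mul, zero_mul]

lemma st14_gcd_mul_cancel_right {q b c : ℕ} (h : Nat.Coprime q c) :
    Nat.gcd q (b * c) = Nat.gcd q b := by
  apply Nat.dvd_antisymm
  · exact Nat.dvd_gcd (Nat.gcd_dvd_left _ _)
      ((Nat.Coprime.coprime_dvd_left (Nat.gcd_dvd_left q (b*c)) h).dvd_of_dvd_mul_right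
        (Nat.gcd_dvd_right q (b*c)))
  · exact Nat.dvd_gcd (Nat.gcd_dvd_left _ _) ((Nat.gcd_dvd_right q b).trans (dvd_mul_right b c))

lemma st14_gcd_mul_cancel_left {q b c : ℕ} (h : Nat.Coprime q b) :
    Nat.gcd q (b * c) = Nat.gcd q c := by
  rw [mul_comm]; exact st14_gcd_mul_cancel_right h

lemma st14_cR_congr {q a1 a2 : ℕ} (h : Nat.gcd q a1 = Nat.gcd q a2) : cR q a1 = cR q a2 := by
  rw [cR, cR, h]

lemma st14_cR_of_coprime {q b : ℕ} (h : Nat.Coprime q b) : cR q b = mu q := by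
  rw [cR, h]
  simp [Nat.divisors_one]

lemma st14_cm_of_top {G : ℕ → ℂ} {p : ℕ} (h : cmIndex G p = ⊤) (k : ℕ) (hk : 1 ≤ k) :
    G (p ^ k) = G p ^ k := by
  by_contra hne
  have hb : cmIndex G p ≤ ((k - 1 : ℕ) : ℕ∞) := by
    rw [cmIndex]
    apply iSup₂_le
    intro w hw
    have hwk : w ≤ k - 1 := by
      by_contra hlt
      exact hne (hw k hk (by omega))
    exact_mod_cast hwk
  rw [h, top_le_iff] at hb
  exact (ENat.coe_ne_top _) hb

lemma st14_conv_prime_pow (f g : ArithmeticFunction ℂ) {p : ℕ} (hp : p.Prime) (i : ℕ) :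
    (f * g) (p ^ i) = ∑ j ∈ Finset.range (i + 1), f (p ^ j) * g (p ^ (i - j)) := by
  rw [ArithmeticFunction.mul_apply, Nat.sum_divisorsAntidiagonal (fun x y => f x * g y),
    Nat.sum_divisors_prime_pow hp]
  refine Finset.sum_congr rfl fun j hj => ?_
  rw [Nat.pow_div (Nat.lt_succ_iff.mp (Finset.mem_range.mp hj)) hp.pos]

lemma st14_FH {G : ℕ → ℂ} {b c : ℕ} (hG : IsMult G) (h1 : G 1 = 1) (hb : 0 < b) (hc : 0 < c)
    (hbc : Nat.Coprime b c)
    (hhyper : ∀ p : ℕ, p.Prime → p ∣ c → cmIndex G p = ⊤) :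
    (st14_aG G).pmul (st14_idDvd (b * c) * st14_muC) =
      ((st14_aG G).pmul (st14_idDvd c)) * ((st14_aG G).pmul (st14_idDvd b * st14_muC)) := by
  have hGm := st14_aG_mult hG h1
  have hF : ((st14_aG G).pmul (st14_idDvd (b * c) * st14_muC)).IsMultiplicative :=
    hGm.pmul ((st14_idDvd_mult _).mul st14_muC_mult)
  have hH : (((st14_aG G).pmul (st14_idDvd c)) * ((st14_aG G).pmul (st14_idDvd b * st14_muC))).IsMultiplicative :=
    (hGm.pmul (st14_idDvd_mult c)).mul (hGm.pmul ((st14_idDvd_mult b).mul st14_muC_mult))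
  rw [ArithmeticFunction.IsMultiplicative.eq_iff_eq_on_prime_powers _ hF _ hH]
  intro p i hp
  rcases Nat.eq_zero_or_pos i with rfl | hi
  · rw [pow_zero, hF.map_one, hH.map_one]
  have hpi : (p : ℕ) ^ i ≠ 0 := pow_ne_zero _ hp.pos.ne'
  have hGk0 : ∀ k : ℕ, k ≠ 0 → st14_aG G (p ^ k) = G (p ^ k) := fun k hk =>
    st14_aG_apply (pow_ne_zero _ hp.pos.ne')
  rw [ArithmeticFunction.pmul_apply, st14_aG_apply hpi, st14_kluyver _ _ hpi, st14_conv_prime_pow _ _ hp i]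
  by_cases hpc : p ∣ c
  · -- p divides c
    have hpb : ¬ p ∣ b := fun hd => hp.one_lt.ne' (Nat.eq_one_of_dvd_coprimes hbc hd hpc)
    have hcb : ∀ k : ℕ, Nat.Coprime (p ^ k) b :=
      fun k => Nat.Coprime.pow_left _ ((hp.coprime_iff_not_dvd).mpr hpb)
    have hGk : ∀ k : ℕ, G (p ^ k) = G p ^ k := by
      intro k
      rcases Nat.eq_zero_or_pos k with rfl | hk
      · simpa using h1
      · exact st14_cm_of_top (hhyper p hp hpc) k hk
    have hL : cR (p ^ i) (b * c) = cR (p ^ i) c :=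
      st14_cR_congr (st14_gcd_mul_cancel_left (hcb i))
    rw [hL, ← st14_kluyver c _ hpi, st14_conv_prime_pow _ _ hp i, Finset.mul_sum]
    refine Finset.sum_congr rfl fun j hj => ?_
    have hji : j ≤ i := Nat.lt_succ_iff.mp (Finset.mem_range.mp hj)
    rw [ArithmeticFunction.pmul_apply, ArithmeticFunction.pmul_apply,
      st14_aG_apply (pow_ne_zero _ hp.pos.ne'), st14_aG_apply (pow_ne_zero _ hp.pos.ne'),
      st14_kluyver b _ (pow_ne_zero _ hp.pos.ne'), st14_cR_of_coprime (hcb (i - j)),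
      st14_idDvd_apply, st14_muC_apply]
    rw [hGk j, hGk (i - j)]
    have : G p ^ j * G p ^ (i - j) = G p ^ i := by
      rw [← pow_add, Nat.add_sub_cancel' hji]
    by_cases hd : p ^ j ∣ c
    · rw [hGk i, ← this]; ring
    · rw [hGk i, ← this]; ring
  · -- p does not divide c
    have hpcc : Nat.Coprime (p ^ i) c :=
      Nat.Coprime.pow_left _ ((hp.coprime_iff_not_dvd).mpr hpc)
    have hL : cR (p ^ i) (b * c) = cR (p ^ i) b :=
      st14_cR_congr (st14_gcd_mul_cancel_right hpcc)
    rw [hL]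
    rw [Finset.sum_eq_single 0]
    · rw [pow_zero, Nat.sub_zero, ArithmeticFunction.pmul_apply, ArithmeticFunction.pmul_apply,
        hGm.map_one, st14_idDvd_apply, if_pos (one_dvd c), st14_aG_apply hpi, st14_kluyver b _ hpi]
      push_cast
      ring
    · intro j hj hj0
      have : ¬ p ^ j ∣ c := fun hd =>
        hpc ((dvd_pow_self p hj0).trans hd)
      rw [ArithmeticFunction.pmul_apply, st14_idDvd_apply, if_neg this, mul_zero, zero_mul]
    · intro h
      exact absurd (Finset.mem_range.mpr (Nat.succ_pos i)) h

lemma st14_star {G : ℕ → ℂ} {b c : ℕ} (hG : IsMult G) (h1 : G 1 = 1) (hb : 0 < b) (hc : 0 < c)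
    (hbc : Nat.Coprime b c)
    (hhyper : ∀ p : ℕ, p.Prime → p ∣ c → cmIndex G p = ⊤)
    (m : ℕ) (hm : m ≠ 0) :
    G m * cR m (b * c) =
      ∑ h ∈ m.divisors.filter (· ∣ c), (G h * (h : ℂ)) * (G (m / h) * cR (m / h) b) := by
  have hFH := congrArg (fun f : ArithmeticFunction ℂ => f m) (st14_FH hG h1 hb hc hbc hhyper)
  rw [ArithmeticFunction.pmul_apply, st14_aG_apply hm, st14_kluyver _ _ hm] at hFH
  rw [hFH, ArithmeticFunction.mul_apply,
    Nat.sum_divisorsAntidiagonal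
      (fun x y => ((st14_aG G).pmul (st14_idDvd c)) x * ((st14_aG G).pmul (st14_idDvd b * st14_muC)) y),
    Finset.sum_filter]
  refine Finset.sum_congr rfl fun h hh => ?_
  have h0 : h ≠ 0 := (Nat.pos_of_mem_divisors hh).ne'
  have hdvd : h ∣ m := (Nat.mem_divisors.mp hh).1
  have hmh : m / h ≠ 0 := by
    have := Nat.div_pos (Nat.le_of_dvd (Nat.pos_of_ne_zero hm) hdvd) (Nat.pos_of_ne_zero h0)
    omega
  rw [ArithmeticFunction.pmul_apply, ArithmeticFunction.pmul_apply, st14_aG_apply h0, st14_aG_apply hmh,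
    st14_kluyver _ _ hmh, st14_idDvd_apply]
  by_cases hd : h ∣ c
  · rw [if_pos hd, if_pos hd]
  · rw [if_neg hd, if_neg hd, mul_zero, zero_mul]

lemma st14_reindex (f : ℕ → ℕ → ℂ) (c N : ℕ) (hc : c ≠ 0) :
    ∑ m ∈ Finset.Icc 1 N, ∑ h ∈ m.divisors.filter (· ∣ c), f h (m / h)
      = ∑ h ∈ c.divisors, ∑ q ∈ Finset.Icc 1 (N / h), f h q := by
  rw [Finset.sum_sigma' (Finset.Icc 1 N) (fun m => m.divisors.filter (· ∣ c))
        (fun m h => f h (m / h)),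
      Finset.sum_sigma' c.divisors (fun h => Finset.Icc 1 (N / h)) (fun h q => f h q)]
  refine Finset.sum_nbij' (fun x => ⟨x.2, x.1 / x.2⟩) (fun y => ⟨y.1 * y.2, y.1⟩) ?_ ?_ ?_ ?_ ?_
  · rintro ⟨m, h⟩ hx
    dsimp only at hx ⊢
    rw [Finset.mem_sigma] at hx
    obtain ⟨hmN, hh⟩ := hx
    simp only [Finset.mem_filter, Nat.mem_divisors] at hh
    obtain ⟨⟨hdvd, hm0⟩, hhc⟩ := hh
    simp only [Finset.mem_Icc] at hmN
    simp only [Finset.mem_sigma, Nat.mem_divisors, Finset.mem_Icc]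
    have h0 : 0 < h := Nat.pos_of_dvd_of_pos hdvd (Nat.pos_of_ne_zero hm0)
    refine ⟨⟨hhc, hc⟩, Nat.one_le_div_iff h0 |>.mpr (Nat.le_of_dvd (Nat.pos_of_ne_zero hm0) hdvd),
      Nat.div_le_div_right hmN.2⟩
  · rintro ⟨h, q⟩ hy
    dsimp only at hy ⊢
    simp only [Finset.mem_sigma, Nat.mem_divisors, Finset.mem_Icc] at hy
    obtain ⟨⟨hhc, _⟩, hq1, hqN⟩ := hy
    have h0 : 0 < h := Nat.pos_of_dvd_of_pos hhc (Nat.pos_of_ne_zero hc)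
    simp only [Finset.mem_sigma, Finset.mem_Icc, Finset.mem_filter, Nat.mem_divisors]
    have hle : h * q ≤ N := by
      rw [mul_comm]; exact (Nat.le_div_iff_mul_le h0).mp hqN
    refine ⟨⟨Nat.one_le_iff_ne_zero.mpr (by positivity), by omega⟩,
      ⟨Dvd.intro q rfl, by positivity⟩, hhc⟩
  · rintro ⟨m, h⟩ hx
    rw [Finset.mem_sigma] at hx
    have hdvd : h ∣ m := ((Finset.mem_filter.mp hx.2).1 |> Nat.mem_divisors.mp).1
    simp [Nat.mul_div_cancel' hdvd]
  · rintro ⟨h, q⟩ hy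
    rw [Finset.mem_sigma, Nat.mem_divisors] at hy
    have h0 : 0 < h := Nat.pos_of_dvd_of_pos hy.1.1 (Nat.pos_of_ne_zero hc)
    simp [Nat.mul_div_cancel_left _ h0]
  · rintro ⟨m, h⟩ _
    rfl

/-- The `R_G`-recursive formula (Corollary 3.4). -/
theorem stmt_14 (G : ℕ → ℂ) (hG : IsMult G) (a b c : ℕ) (hb : 0 < b) (hc : 0 < c)
    (habc : a = b * c) (hbc : Nat.Coprime b c)
    (hhyper : ∀ p : ℕ, p.Prime → p ∣ c → cmIndex G p = ⊤) :
    (∀ x : ℝ, 0 ≤ x → RS G a x = ∑ h ∈ c.divisors, G h * (h : ℂ) * RS G b (x / h)) ∧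
    (∀ L : ℂ, RTendsto G b L → RTendsto G a (DGsum G c * L)) := by
  have part1 : ∀ x : ℝ, RS G a x = ∑ h ∈ c.divisors, G h * (h : ℂ) * RS G b (x / h) := by
    intro x
    by_cases h1 : G 1 = 1
    · rw [RS, habc]
      have hstep : ∀ m ∈ Finset.Icc 1 ⌊x⌋₊, G m * cR m (b * c) =
          ∑ h ∈ m.divisors.filter (· ∣ c), (G h * (h : ℂ)) * (G (m / h) * cR (m / h) b) := by
        intro m hm
        exact st14_star hG h1 hb hc hbc hhyper m
          (by have := (Finset.mem_Icc.mp hm).1; omega)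
      rw [Finset.sum_congr rfl hstep,
        st14_reindex (fun h q => (G h * (h : ℂ)) * (G q * cR q b)) c ⌊x⌋₊ hc.ne']
      refine Finset.sum_congr rfl fun h hh => ?_
      rw [RS, Nat.floor_div_natCast x h, Finset.mul_sum]
    · -- degenerate case : G vanishes on positives
      have h11 : G 1 = G 1 * G 1 := by
        simpa using hG 1 1 one_pos one_pos (Nat.coprime_one_left 1)
      have h10 : G 1 = 0 := by
        rcases mul_eq_zero.mp (show G 1 * (G 1 - 1) = 0 by linear_combination -h11) with h | h
        · exact h
        · exact absurd (sub_eq_zero.mp h) h1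
      have hzero : ∀ n : ℕ, n ≠ 0 → G n = 0 := by
        intro n hn
        have := hG n 1 (Nat.pos_of_ne_zero hn) one_pos (Nat.coprime_one_right n)
        simpa [h10] using this
      have hz : ∀ y : ℝ, ∀ d : ℕ, RS G d y = 0 := by
        intro y d
        rw [RS]
        refine Finset.sum_eq_zero fun q hq => ?_
        rw [hzero q (by have := (Finset.mem_Icc.mp hq).1; omega), zero_mul]
      rw [hz]
      refine (Finset.sum_eq_zero fun h hh => ?_).symm
      rw [hzero h (Nat.pos_of_mem_divisors hh).ne', zero_mul, zero_mul]
  refine ⟨fun x _ => part1 x, fun L hL => ?_⟩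
  have lim : Tendsto (fun x : ℝ => ∑ h ∈ c.divisors, G h * (h : ℂ) * RS G b (x / h)) atTop
      (nhds (∑ h ∈ c.divisors, G h * (h : ℂ) * L)) := by
    refine tendsto_finset_sum _ fun h hh => ?_
    have hpos : (0 : ℝ) < (h : ℝ) := by
      exact_mod_cast Nat.pos_of_mem_divisors hh
    exact (hL.comp (tendsto_id.atTop_div_const hpos)).const_mul _
  have hDG : DGsum G c * L = ∑ h ∈ c.divisors, G h * (h : ℂ) * L := by
    rw [DGsum, Finset.sum_mul]
  rw [_root_.RTendsto, hDG]
  exact lim.congr fun x => (part1 x).symm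
end

section
/- Let G : ℕ → ℂ be any arithmetic function and a ∈ ℕ. Then for every real x ≥ 0: R_G(a,x) = Σ_{d ∣ a} d·L_G(d, x/d), and L_G(a, x/a) = (1/a)·Σ_{t ∣ a} R_G(t,x)·μ(a/t). Consequently: if L_G(d) converges for every d ∣ a, then R_G(a) converges and R_G(a) = Σ_{d ∣ a} d·L_G(d); if R_G(d) converges for every d ∣ a, then L_G(a) converges and L_G(a) = (1/a)·Σ_{t ∣ a} R_G(t)·μ(a/t). In particular, R_G(a) converges for every a ∈ ℕ if and only if L_G(a) converges for every a ∈ ℕ. -/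
open Filter Finset

lemma key (G : ℕ → ℂ) (a : ℕ) (ha : 0 < a) (x : ℝ) :
    RS G a x = ∑ d ∈ a.divisors, (d : ℂ) * LS G d (x / d) := by
  unfold RS LS cR
  set N := ⌊x⌋₊ with hN
  have hfl : ∀ d : ℕ, ⌊x / (d : ℝ)⌋₊ = N / d := fun d => Nat.floor_div_natCast x d
  simp only [hfl]
  have hgcd : ∀ q ∈ Finset.Icc 1 N, (Nat.gcd q a).divisors
      = a.divisors.filter (· ∣ q) := by
    intro q hq
    rw [Finset.mem_Icc] at hq
    ext d
    simp only [Nat.mem_divisors, Finset.mem_filter]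
    constructor
    · rintro ⟨hd, -⟩
      exact ⟨⟨hd.trans (Nat.gcd_dvd_right _ _), ha.ne'⟩, hd.trans (Nat.gcd_dvd_left _ _)⟩
    · rintro ⟨⟨hda, -⟩, hdq⟩
      exact ⟨Nat.dvd_gcd hdq hda, fun h => by
        have := Nat.gcd_eq_zero_iff.mp h
        omega⟩
  rw [Finset.sum_congr rfl fun q hq => by rw [hgcd q hq]]
  have step1 : ∀ q ∈ Finset.Icc 1 N,
      G q * ∑ d ∈ a.divisors.filter (· ∣ q), (d : ℂ) * mu (q / d)
      = ∑ d ∈ a.divisors, if d ∣ q then G q * ((d : ℂ) * mu (q / d)) else 0 := by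
    intro q _
    rw [Finset.mul_sum, ← Finset.sum_filter]
  rw [Finset.sum_congr rfl step1, Finset.sum_comm]
  refine Finset.sum_congr rfl fun d hd => ?_
  have hd0 : 0 < d := Nat.pos_of_mem_divisors hd
  rw [← Finset.sum_filter, Finset.mul_sum]
  refine Finset.sum_nbij' (fun q => q / d) (fun K => d * K) ?_ ?_ ?_ ?_ ?_
  · intro q hq
    simp only [Finset.mem_filter, Finset.mem_Icc] at hq ⊢
    obtain ⟨⟨h1, h2⟩, hdq⟩ := hq
    refine ⟨?_, Nat.div_le_div_right h2⟩
    exact Nat.one_le_div_iff hd0 |>.mpr (Nat.le_of_dvd (by omega) hdq)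
  · intro K hK
    simp only [Finset.mem_Icc] at hK
    simp only [Finset.mem_filter, Finset.mem_Icc]
    refine ⟨⟨Nat.one_le_iff_ne_zero.mpr (Nat.mul_ne_zero hd0.ne' (by omega)), ?_⟩,
      Dvd.intro K rfl⟩
    calc d * K ≤ d * (N / d) := Nat.mul_le_mul_left d hK.2
    _ ≤ N := Nat.mul_div_le N d
  · intro q hq
    simp only [Finset.mem_filter] at hq
    exact Nat.mul_div_cancel' hq.2
  · intro K _
    exact Nat.mul_div_cancel_left K hd0
  · intro q hq
    simp only [Finset.mem_filter] at hq
    rw [Nat.mul_div_cancel' hq.2]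
    ring

lemma key2 (G : ℕ → ℂ) (a : ℕ) (ha : 0 < a) (x : ℝ) :
    LS G a (x / a) = (1 / (a : ℂ)) * ∑ t ∈ a.divisors, RS G t x * mu (a / t) := by
  have hinv := (ArithmeticFunction.sum_eq_iff_sum_mul_moebius_eq
    (f := fun d => (d : ℂ) * LS G d (x / d)) (g := fun n => RS G n x)).mp
    (fun n hn => (key G n hn x).symm) a ha
  have hanti : ∑ p ∈ a.divisorsAntidiagonal,
      ((ArithmeticFunction.moebius p.1 : ℤ) : ℂ) * RS G p.2 x
      = ∑ t ∈ a.divisors, RS G t x * mu (a / t) := by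
    rw [Nat.sum_divisorsAntidiagonal' (f := fun d e =>
      ((ArithmeticFunction.moebius d : ℤ) : ℂ) * RS G e x)]
    exact Finset.sum_congr rfl fun t _ => by rw [mu]; ring
  rw [← hanti, hinv]
  have haC : (a : ℂ) ≠ 0 := Nat.cast_ne_zero.mpr ha.ne'
  field_simp

lemma key3 (G : ℕ → ℂ) (a : ℕ) (ha : 0 < a) (L : ℕ → ℂ)
    (hL : ∀ d ∈ a.divisors, LTendsto G d (L d)) :
    RTendsto G a (∑ d ∈ a.divisors, (d : ℂ) * L d) := by
  have h1 : Tendsto (fun x : ℝ => ∑ d ∈ a.divisors, (d : ℂ) * LS G d (x / d))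
      atTop (nhds (∑ d ∈ a.divisors, (d : ℂ) * L d)) := by
    refine tendsto_finset_sum _ fun d hd => ?_
    have hd0 : (0 : ℝ) < d := Nat.cast_pos.mpr (Nat.pos_of_mem_divisors hd)
    exact ((hL d hd).comp (tendsto_id.atTop_div_const hd0)).const_mul _
  exact h1.congr fun x => (key G a ha x).symm

lemma key4 (G : ℕ → ℂ) (a : ℕ) (ha : 0 < a) (R : ℕ → ℂ)
    (hR : ∀ t ∈ a.divisors, RTendsto G t (R t)) :
    LTendsto G a ((1 / (a : ℂ)) * ∑ t ∈ a.divisors, R t * mu (a / t)) := by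
  have haR : (0 : ℝ) < a := Nat.cast_pos.mpr ha
  have h1 : Tendsto (fun x : ℝ =>
      (1 / (a : ℂ)) * ∑ t ∈ a.divisors, RS G t ((a : ℝ) * x) * mu (a / t))
      atTop (nhds ((1 / (a : ℂ)) * ∑ t ∈ a.divisors, R t * mu (a / t))) := by
    refine Tendsto.const_mul _ (tendsto_finset_sum _ fun t ht => ?_)
    exact ((hR t ht).comp (tendsto_id.const_mul_atTop haR)).mul_const _
  refine h1.congr fun x => ?_
  have : ((a : ℝ) * x) / (a : ℝ) = x := by field_simp
  rw [← key2 G a ha ((a : ℝ) * x), this]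
/-- The `LR` formula (Corollary 3.7): `G` is a Ramanujan coefficient iff it is a
Lucht coefficient. -/
theorem stmt_16 (G : ℕ → ℂ) :
    (∀ a : ℕ, 0 < a → ∀ x : ℝ, 0 ≤ x →
      RS G a x = ∑ d ∈ a.divisors, (d : ℂ) * LS G d (x / d)) ∧
    (∀ a : ℕ, 0 < a → ∀ x : ℝ, 0 ≤ x →
      LS G a (x / a) = (1 / (a : ℂ)) * ∑ t ∈ a.divisors, RS G t x * mu (a / t)) ∧
    (∀ a : ℕ, 0 < a → ∀ L : ℕ → ℂ, (∀ d ∈ a.divisors, LTendsto G d (L d)) →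
      RTendsto G a (∑ d ∈ a.divisors, (d : ℂ) * L d)) ∧
    (∀ a : ℕ, 0 < a → ∀ R : ℕ → ℂ, (∀ t ∈ a.divisors, RTendsto G t (R t)) →
      LTendsto G a ((1 / (a : ℂ)) * ∑ t ∈ a.divisors, R t * mu (a / t))) ∧
    ((∀ a : ℕ, 0 < a → RConv G a) ↔ (∀ a : ℕ, 0 < a → LConv G a)) := by
  refine ⟨fun a ha x _ => key G a ha x, fun a ha x _ => key2 G a ha x, key3 G, key4 G, ?_⟩
  constructor
  · intro hR a ha
    classical
    set R : ℕ → ℂ := fun t => if h : RConv G t then h.choose else 0 with hRdef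
    refine ⟨_, key4 G a ha R fun t ht => ?_⟩
    have h := hR t (Nat.pos_of_mem_divisors ht)
    simp only [hRdef, dif_pos h]
    exact h.choose_spec
  · intro hL a ha
    classical
    set L : ℕ → ℂ := fun d => if h : LConv G d then h.choose else 0 with hLdef
    refine ⟨_, key3 G a ha L fun d hd => ?_⟩
    have h := hL d (Nat.pos_of_mem_divisors hd)
    simp only [hLdef, dif_pos h]
    exact h.choose_spec
end

section
/- Let G : ℕ → ℂ be multiplicative, let a, b, c ∈ ℕ, and let p be a prime not dividing a·b·c. Let w ∈ ℕ be such that Δ := G(p^w)·G(p) − G(p^{w+1}) ≠ 0. Then for every real x ≥ 0: F_G(a, p·b, c)(x) = ( G(p)·F_G(a, b, p^w·c)(x) − G(p^{w+1})·F_G(a, b, c)(x) ) / Δ. Consequently, if both F_G(a,b,c) and F_G(a,b,p^w·c) converge, then F_G(a, p·b, c) converges. -/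
open Filter Finset

/-- The `RSL` series `F_G(a,b,c)(x) = ∑_{q ≤ x, (q,b)=1} G(cq) c_q(a)`. -/
noncomputable def FS (G : ℕ → ℂ) (a b c : ℕ) (x : ℝ) : ℂ :=
  ∑ q ∈ (Finset.Icc 1 ⌊x⌋₊).filter fun q => Nat.gcd q b = 1, G (c * q) * cR q a

lemma cR_zero_of_sq_dvd {p q a : ℕ} (hp : p.Prime) (hpa : ¬ p ∣ a) (hq : p ^ 2 ∣ q) :
    cR q a = 0 := by
  unfold cR
  apply Finset.sum_eq_zero
  intro d hd
  rw [Nat.mem_divisors] at hd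
  have hda : d ∣ a := hd.1.trans (Nat.gcd_dvd_right _ _)
  have hdq : d ∣ q := hd.1.trans (Nat.gcd_dvd_left _ _)
  have hpd : Nat.Coprime p d := (hp.coprime_iff_not_dvd).mpr (fun h => hpa (h.trans hda))
  have hd0 : 0 < d := Nat.pos_of_dvd_of_pos hda (Nat.pos_of_ne_zero fun h => hpa (h ▸ dvd_zero p))
  have h2 : p ^ 2 ∣ q / d := by
    obtain ⟨k, hk⟩ := hdq
    have : p ^ 2 ∣ k := (Nat.Coprime.pow_left 2 hpd).dvd_of_dvd_mul_left (hk ▸ hq)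
    rw [hk, Nat.mul_div_cancel_left _ hd0]
    exact this
  have : ¬ Squarefree (q / d) := by
    intro hsq
    exact hp.not_isUnit (hsq p (by rw [← sq]; exact h2))
  have : ArithmeticFunction.moebius (q / d) = 0 :=
    ArithmeticFunction.moebius_eq_zero_of_not_squarefree this
  simp [mu, this]

/-- The `F_G`-transformation formula (Theorem 7.1). -/
theorem stmt_17 (G : ℕ → ℂ) (hG : IsMult G) (a b c p w : ℕ)
    (ha : 0 < a) (hb : 0 < b) (hc : 0 < c)
    (hp : p.Prime) (hpabc : ¬ p ∣ a * b * c) (hw : 1 ≤ w)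
    (hΔ : G (p ^ w) * G p - G (p ^ (w + 1)) ≠ 0) :
    (∀ x : ℝ, 0 ≤ x →
      FS G a (p * b) c x =
        (G p * FS G a b (p ^ w * c) x - G (p ^ (w + 1)) * FS G a b c x) /
          (G (p ^ w) * G p - G (p ^ (w + 1)))) ∧
    ((∃ L, Tendsto (fun x : ℝ => FS G a b c x) atTop (nhds L)) →
      (∃ L, Tendsto (fun x : ℝ => FS G a b (p ^ w * c) x) atTop (nhds L)) →
      ∃ L, Tendsto (fun x : ℝ => FS G a (p * b) c x) atTop (nhds L)) := by
  have hpa : ¬ p ∣ a := fun h => hpabc (dvd_mul_of_dvd_left (dvd_mul_of_dvd_left h b) c)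
  have hpb : ¬ p ∣ b := fun h => hpabc (dvd_mul_of_dvd_left (dvd_mul_of_dvd_right h a) c)
  have hpc : ¬ p ∣ c := fun h => hpabc (dvd_mul_of_dvd_right h (a * b))
  have key : ∀ x : ℝ,
      FS G a (p * b) c x * (G (p ^ w) * G p - G (p ^ (w + 1))) =
        G p * FS G a b (p ^ w * c) x - G (p ^ (w + 1)) * FS G a b c x := by
    intro x
    unfold FS
    rw [Finset.mul_sum, Finset.mul_sum, ← Finset.sum_sub_distrib, Finset.sum_mul]
    have hfil : (Finset.Icc 1 ⌊x⌋₊).filter (fun q => Nat.gcd q (p * b) = 1)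
        = ((Finset.Icc 1 ⌊x⌋₊).filter (fun q => Nat.gcd q b = 1)).filter
            (fun q => ¬ p ∣ q) := by
      rw [Finset.filter_filter]
      apply Finset.filter_congr
      intro q _
      constructor
      · intro h
        have h' : Nat.Coprime q p ∧ Nat.Coprime q b := Nat.coprime_mul_iff_right.mp h
        exact ⟨h'.2, fun hd => hp.coprime_iff_not_dvd.mp h'.1.symm hd⟩
      · intro ⟨h1, h2⟩
        exact Nat.coprime_mul_iff_right.mpr ⟨(hp.coprime_iff_not_dvd.mpr h2).symm, h1⟩
    rw [hfil, Finset.sum_filter]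
    apply Finset.sum_congr rfl
    intro q hq
    rw [Finset.mem_filter, Finset.mem_Icc] at hq
    have hq1 : 1 ≤ q := hq.1.1
    by_cases hpq : p ∣ q
    · rw [if_neg (by simpa using hpq)]
      obtain ⟨m, rfl⟩ := hpq
      have hm0 : 0 < m := Nat.pos_of_ne_zero fun h => by simp [h] at hq1
      by_cases hpm : p ∣ m
      · have : cR (p * m) a = 0 := cR_zero_of_sq_dvd hp hpa (by
          obtain ⟨k, rfl⟩ := hpm; ring_nf; exact ⟨k, by ring⟩)
        rw [this]
        ring
      · have hcm : Nat.Coprime p (c * m) :=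
          Nat.coprime_mul_iff_right.mpr ⟨hp.coprime_iff_not_dvd.mpr hpc,
            hp.coprime_iff_not_dvd.mpr hpm⟩
        have h1 : G (c * (p * m)) = G p * G (c * m) := by
          rw [show c * (p * m) = p * (c * m) by ring,
            hG p (c * m) hp.pos (Nat.mul_pos hc hm0) hcm]
        have h2 : G (p ^ w * c * (p * m)) = G (p ^ (w + 1)) * G (c * m) := by
          rw [show p ^ w * c * (p * m) = p ^ (w + 1) * (c * m) by ring,
            hG (p ^ (w + 1)) (c * m) (pow_pos hp.pos _) (Nat.mul_pos hc hm0)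
              (Nat.Coprime.pow_left _ hcm)]
        rw [h1, h2]
        ring
    · rw [if_pos (by simpa using hpq)]
      have hcq : Nat.Coprime p (c * q) :=
        Nat.coprime_mul_iff_right.mpr ⟨hp.coprime_iff_not_dvd.mpr hpc,
          hp.coprime_iff_not_dvd.mpr hpq⟩
      have h2 : G (p ^ w * c * q) = G (p ^ w) * G (c * q) := by
        rw [mul_assoc, hG (p ^ w) (c * q) (pow_pos hp.pos _) (Nat.mul_pos hc (by omega))
          (Nat.Coprime.pow_left _ hcq)]
      rw [h2]
      ring
  constructor
  · intro x _
    rw [eq_div_iff hΔ, key x]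
  · rintro ⟨L1, h1⟩ ⟨L2, h2⟩
    refine ⟨(G p * L2 - G (p ^ (w + 1)) * L1) / (G (p ^ w) * G p - G (p ^ (w + 1))), ?_⟩
    have heq : (fun x : ℝ => FS G a (p * b) c x)
        = fun x => (G p * FS G a b (p ^ w * c) x - G (p ^ (w + 1)) * FS G a b c x) /
            (G (p ^ w) * G p - G (p ^ (w + 1))) :=
      funext fun x => by rw [eq_div_iff hΔ, key x]
    rw [heq]
    exact ((h2.const_mul _).sub (h1.const_mul _)).div_const _
end

section
/- Let α ∈ ℂ with α ≠ −1, let ρ ∈ ℝ with ρ > 1, and let ℓ ∈ ℂ. Let H : ℝ_{≥0} → ℂ satisfy H(x) = H(⌊x⌋) for all x ≥ 0, and suppose that H(x) + α·H(x/ρ) tends to ℓ as x → ∞. If either |α| < 1, or both |α| > ρ and H(x) = O(x) as x → ∞, then H(x) tends to ℓ/(1+α) as x → ∞. -/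
open Filter Finset

set_option maxHeartbeats 2000000 in
/-- **Converse convergence theorem** (Theorem 6.1). -/
theorem stmt_18 (α : ℂ) (hα : α ≠ -1) (ρ : ℝ) (hρ : 1 < ρ) (l : ℂ) (H : ℝ → ℂ)
    (hfloor : ∀ x : ℝ, 0 ≤ x → H x = H (⌊x⌋₊ : ℝ))
    (hlim : Tendsto (fun x : ℝ => H x + α * H (x / ρ)) atTop (nhds l))
    (hcase : ‖α‖ < 1 ∨
      (ρ < ‖α‖ ∧
        ∃ C D : ℝ, 0 < C ∧ 0 < D ∧ ∀ x : ℝ, 0 ≤ x → ‖H x‖ ≤ C * x + D)) :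
    Tendsto H atTop (nhds (l / (1 + α))) := by
  have h1α : (1 : ℂ) + α ≠ 0 := fun h => hα (by linear_combination h)
  set L : ℂ := l / (1 + α) with hLdef
  have hL : l = L + α * L := by
    rw [hLdef]; field_simp
  have hρ0 : (0:ℝ) < ρ := lt_trans one_pos hρ
  set E : ℝ → ℝ := fun x => ‖H x + α * H (x / ρ) - l‖ with hEdef
  have hE : Tendsto E atTop (nhds 0) := tendsto_iff_norm_sub_tendsto_zero.mp hlim
  have hEe : ∀ ε : ℝ, 0 < ε → ∃ X : ℝ, ∀ x ≥ X, E x ≤ ε := by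
    intro ε hε
    obtain ⟨X, hX⟩ := Metric.tendsto_atTop.mp hE ε hε
    refine ⟨X, fun x hx => ?_⟩
    have h2 := hX x hx
    rw [Real.dist_eq, sub_zero] at h2
    exact le_of_lt (lt_of_abs_lt h2)
  have habs : ∀ x : ℝ, ‖H x - L‖ ≤ E x + ‖α‖ * ‖H (x / ρ) - L‖ := by
    intro x
    have hk : H x - L = (H x + α * H (x / ρ) - l) - α * (H (x / ρ) - L) := by
      linear_combination hL
    rw [hk]
    refine le_trans (norm_sub_le _ _) ?_
    rw [norm_mul]
  rcases hcase with hA | ⟨hA, C, D, hC, hD, hbd⟩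
  · -- Case |α| < 1
    have hA0 : (0:ℝ) ≤ ‖α‖ := norm_nonneg α
    have hA1 : 0 < 1 - ‖α‖ := by linarith
    -- boundedness of H
    obtain ⟨X0, hX0⟩ := hEe 1 one_pos
    set X1 : ℝ := max X0 1 with hX1def
    have hX11 : (1:ℝ) ≤ X1 := le_max_right _ _
    have hne : (Finset.range (⌊X1⌋₊ + 1)).Nonempty := ⟨0, by simp⟩
    set M0 : ℝ := (Finset.range (⌊X1⌋₊ + 1)).sup' hne (fun n => ‖H (n : ℝ)‖) with hM0def
    have hbase : ∀ x : ℝ, 0 ≤ x → x ≤ X1 → ‖H x‖ ≤ M0 := by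
      intro x hx hxle
      rw [hfloor x hx]
      exact Finset.le_sup' (fun n : ℕ => ‖H (n : ℝ)‖)
        (Finset.mem_range.mpr (Nat.lt_succ_of_le (Nat.floor_le_floor hxle)))
    have hM0 : 0 ≤ M0 := by
      have h0 := Finset.le_sup' (fun n : ℕ => ‖H (n : ℝ)‖)
        (Finset.mem_range.mpr (Nat.succ_pos ⌊X1⌋₊))
      exact le_trans (norm_nonneg _) h0
    set M : ℝ := M0 + (1 + ‖l‖) / (1 - ‖α‖) with hMdef
    have hdiv : (1 - ‖α‖) * ((1 + ‖l‖) / (1 - ‖α‖)) = 1 + ‖l‖ := by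
      rw [mul_comm]; exact div_mul_cancel₀ _ hA1.ne'
    have hq0 : 0 ≤ (1 + ‖l‖) / (1 - ‖α‖) :=
      div_nonneg (by positivity) hA1.le
    have hMM0 : M0 ≤ M := by rw [hMdef]; linarith
    have hHrec : ∀ x : ℝ, ‖H x‖ ≤ E x + ‖l‖ + ‖α‖ * ‖H (x/ρ)‖ := by
      intro x
      have hk : H x = ((H x + α * H (x/ρ) - l) + l) - α * H (x/ρ) := by ring
      calc ‖H x‖ = ‖((H x + α * H (x/ρ) - l) + l) - α * H (x/ρ)‖ := by rw [← hk]
        _ ≤ ‖(H x + α * H (x/ρ) - l) + l‖ + ‖α * H (x/ρ)‖ := norm_sub_le _ _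
        _ ≤ (‖H x + α * H (x/ρ) - l‖ + ‖l‖) + ‖α * H (x/ρ)‖ := by
            have := norm_add_le (H x + α * H (x/ρ) - l) l
            linarith
        _ = E x + ‖l‖ + ‖α‖ * ‖H (x/ρ)‖ := by rw [norm_mul]
    have hMrec : ∀ n : ℕ, ∀ x : ℝ, 0 ≤ x → x ≤ X1 * ρ ^ n → ‖H x‖ ≤ M := by
      intro n
      induction n with
      | zero =>
        intro x hx hxle
        rw [pow_zero, mul_one] at hxle
        exact le_trans (hbase x hx hxle) hMM0
      | succ n ih =>
        intro x hx hxle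
        by_cases hcx : x ≤ X1
        · exact le_trans (hbase x hx hcx) hMM0
        · push_neg at hcx
          have hEx : E x ≤ 1 := hX0 x (le_trans (le_max_left _ _) hcx.le)
          have hdiv1 : 0 ≤ x / ρ := div_nonneg hx hρ0.le
          have hdiv2 : x / ρ ≤ X1 * ρ ^ n := by
            rw [div_le_iff₀ hρ0]
            calc x ≤ X1 * ρ ^ (n+1) := hxle
              _ = X1 * ρ ^ n * ρ := by ring
          have ihh := ih (x/ρ) hdiv1 hdiv2
          have h2 := hHrec x
          have h3 : ‖α‖ * ‖H (x/ρ)‖ ≤ ‖α‖ * M :=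
            mul_le_mul_of_nonneg_left ihh hA0
          rw [hMdef]
          nlinarith [hM0, hdiv]
    have hMall : ∀ x : ℝ, 0 ≤ x → ‖H x‖ ≤ M := by
      intro x hx
      obtain ⟨n, hn⟩ := pow_unbounded_of_one_lt x hρ
      refine hMrec n x hx ?_
      have hpn : (0:ℝ) < ρ ^ n := pow_pos hρ0 n
      nlinarith
    set MJ : ℝ := M + ‖L‖ with hMJdef
    have hMJb : ∀ x : ℝ, 0 ≤ x → ‖H x - L‖ ≤ MJ := by
      intro x hx
      refine le_trans (norm_sub_le _ _) ?_
      rw [hMJdef]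
      exact add_le_add_left (hMall x hx) _
    have hMJ0 : 0 ≤ MJ := le_trans (norm_nonneg _) (hMJb 0 le_rfl)
    rw [Metric.tendsto_atTop]
    intro ε hε
    set ε₀ : ℝ := ε * (1 - ‖α‖) / 2 with hε₀def
    have hε₀ : 0 < ε₀ := by
      rw [hε₀def]; exact div_pos (mul_pos hε hA1) two_pos
    obtain ⟨X2, hX2⟩ := hEe ε₀ hε₀
    set X3 : ℝ := max X2 1 with hX3def
    have hX31 : (1:ℝ) ≤ X3 := le_max_right _ _
    have claim : ∀ n : ℕ, ∀ x : ℝ, X3 * ρ ^ n ≤ x → ‖H x - L‖ ≤ ε/2 + ‖α‖ ^ n * MJ := by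
      intro n
      induction n with
      | zero =>
        intro x hxge
        rw [pow_zero, mul_one] at hxge
        have h1 := hMJb x (by linarith)
        rw [pow_zero, one_mul]
        linarith
      | succ n ih =>
        intro x hxge
        have hρn : (1:ℝ) ≤ ρ ^ (n+1) := one_le_pow₀ hρ.le
        have hX3x : X3 ≤ x := by nlinarith
        have hEx : E x ≤ ε₀ := hX2 x (le_trans (le_max_left _ _) hX3x)
        have hxq : X3 * ρ ^ n ≤ x / ρ := by
          rw [le_div_iff₀ hρ0]
          calc X3 * ρ ^ n * ρ = X3 * ρ ^ (n+1) := by ring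
            _ ≤ x := hxge
        have ihx := ih (x/ρ) hxq
        have h2 := habs x
        have h3 : ‖α‖ * ‖H (x/ρ) - L‖ ≤ ‖α‖ * (ε/2 + ‖α‖ ^ n * MJ) := by
          nlinarith [norm_nonneg α, norm_nonneg (H (x/ρ) - L)]
        have h4 : ‖α‖ * (ε/2 + ‖α‖ ^ n * MJ) = ‖α‖ * (ε/2) + ‖α‖ ^ (n+1) * MJ := by
          ring
        have h5 : ε₀ + ‖α‖ * (ε/2) ≤ ε/2 := by
          rw [hε₀def]; exact le_of_eq (by ring)
        linarith
    obtain ⟨n, hn⟩ : ∃ n : ℕ, ‖α‖ ^ n * MJ < ε/2 := by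
      have ht : Tendsto (fun n : ℕ => ‖α‖ ^ n * MJ) atTop (nhds 0) := by
        simpa using (tendsto_pow_atTop_nhds_zero_of_lt_one hA0 hA).mul_const MJ
      obtain ⟨n, hn⟩ := Metric.tendsto_atTop.mp ht (ε/2) (by linarith)
      refine ⟨n, ?_⟩
      have h2 := hn n le_rfl
      rw [Real.dist_eq, sub_zero] at h2
      exact lt_of_abs_lt h2
    refine ⟨X3 * ρ ^ n, fun x hx => ?_⟩
    rw [dist_eq_norm]
    have := claim n x hx
    linarith
  · -- Case ρ < |α|
    have hA1 : 1 < ‖α‖ := lt_trans hρ hA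
    have hA0 : (0:ℝ) < ‖α‖ := by linarith
    have hAm1 : (0:ℝ) < ‖α‖ - 1 := by linarith
    have habs2 : ∀ y : ℝ, ‖α‖ * ‖H y - L‖ ≤ E (ρ * y) + ‖H (ρ * y) - L‖ := by
      intro y
      have hyy : ρ * y / ρ = y := mul_div_cancel_left₀ y hρ0.ne'
      have hk : α * (H y - L) = (H (ρ*y) + α * H (ρ*y/ρ) - l) - (H (ρ*y) - L) := by
        rw [hyy]; linear_combination hL
      calc ‖α‖ * ‖H y - L‖ = ‖α * (H y - L)‖ := (norm_mul _ _).symm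
        _ = ‖(H (ρ*y) + α * H (ρ*y/ρ) - l) - (H (ρ*y) - L)‖ := by rw [hk]
        _ ≤ ‖H (ρ*y) + α * H (ρ*y/ρ) - l‖ + ‖H (ρ*y) - L‖ := norm_sub_le _ _
        _ = E (ρ*y) + ‖H (ρ*y) - L‖ := by simp only [hEdef]
    set D' : ℝ := D + ‖L‖ with hD'def
    have hD'0 : 0 < D' := by
      have := norm_nonneg L
      rw [hD'def]; linarith
    set r : ℝ := ρ / ‖α‖ with hrdef
    have hr0 : 0 < r := div_pos hρ0 hA0
    have hr1 : r < 1 := (div_lt_one hA0).mpr hA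
    clear_value D' r
    rw [Metric.tendsto_atTop]
    intro ε hε
    set ε₀ : ℝ := ε * (‖α‖ - 1) / 2 with hε₀def
    have hε₀ : 0 < ε₀ := by
      rw [hε₀def]; exact div_pos (mul_pos hε hAm1) two_pos
    obtain ⟨X2, hX2⟩ := hEe ε₀ hε₀
    set X3 : ℝ := max X2 0 with hX3def
    have hX30 : (0:ℝ) ≤ X3 := le_max_right _ _
    have hX2X3 : X2 ≤ X3 := le_max_left _ _
    clear_value ε₀ X3
    have hq0 : 0 ≤ ε₀ / (‖α‖ - 1) := le_of_lt (div_pos hε₀ hAm1)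
    have claim : ∀ n : ℕ, ∀ y : ℝ, X3 ≤ y →
        ‖H y - L‖ ≤ ε₀ / (‖α‖-1) + (C*y + D') * r ^ n := by
      intro n
      induction n with
      | zero =>
        intro y hy
        have hy0 : 0 ≤ y := le_trans hX30 hy
        have h1 := hbd y hy0
        have h2 : ‖H y - L‖ ≤ ‖H y‖ + ‖L‖ := norm_sub_le _ _
        rw [pow_zero, mul_one, hD'def]
        linarith
      | succ n ih =>
        intro y hy
        have hy0 : 0 ≤ y := le_trans hX30 hy
        have hρy : X3 ≤ ρ * y := by nlinarith
        have ihρ := ih (ρ*y) hρy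
        have hEρ : E (ρ*y) ≤ ε₀ := hX2 _ (le_trans hX2X3 hρy)
        have h2 := habs2 y
        have hrn : (0:ℝ) ≤ r ^ n := le_of_lt (pow_pos hr0 n)
        have hCy : 0 ≤ C * y := mul_nonneg hC.le hy0
        have key1 : (C*(ρ*y) + D') * r ^ n ≤ (C*y + D') * (r ^ n * ρ) := by
          have hin : C*(ρ*y) + D' ≤ (C*y + D') * ρ := by nlinarith
          nlinarith
        have hfield : ε₀ + ε₀/(‖α‖-1) = ε₀/(‖α‖-1) * ‖α‖ := by
          have hc := div_mul_cancel₀ ε₀ hAm1.ne'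
          nlinarith [hc]
        have hrA : r ^ (n+1) * ‖α‖ = r ^ n * ρ := by
          have hc : r * ‖α‖ = ρ := by rw [hrdef]; exact div_mul_cancel₀ ρ hA0.ne'
          rw [pow_succ, mul_assoc, hc]
        have main : ‖α‖ * ‖H y - L‖ ≤
            ‖α‖ * (ε₀/(‖α‖-1) + (C*y+D') * r ^ (n+1)) := by
          have e1 : ‖α‖ * (ε₀/(‖α‖-1) + (C*y+D') * r ^ (n+1)) =
              ε₀/(‖α‖-1) * ‖α‖ + (C*y+D') * (r ^ n * ρ) := by
            rw [← hrA]; ring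
          rw [e1, ← hfield]
          calc ‖α‖ * ‖H y - L‖ ≤ E (ρ*y) + ‖H (ρ*y) - L‖ := h2
            _ ≤ ε₀ + (ε₀/(‖α‖-1) + (C*(ρ*y)+D') * r ^ n) := add_le_add hEρ ihρ
            _ ≤ ε₀ + ε₀/(‖α‖-1) + (C*y+D') * (r ^ n * ρ) := by linarith
        exact le_of_mul_le_mul_left main hA0
    have hhalf : ε₀ / (‖α‖-1) = ε/2 := by
      calc ε₀ / (‖α‖-1) = (‖α‖-1) * (ε/2) / (‖α‖-1) := by rw [hε₀def]; ring_nf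
        _ = ε/2 := mul_div_cancel_left₀ _ hAm1.ne'
    refine ⟨X3, fun y hy => ?_⟩
    rw [dist_eq_norm]
    have hlim2 : Tendsto (fun n : ℕ => (C*y + D') * r ^ n) atTop (nhds 0) := by
      simpa using (tendsto_pow_atTop_nhds_zero_of_lt_one hr0.le hr1).const_mul (C*y+D')
    have hle : ‖H y - L‖ - ε₀/(‖α‖-1) ≤ 0 :=
      ge_of_tendsto hlim2 (Eventually.of_forall fun n => by linarith [claim n y hy])
    rw [hhalf] at hle
    linarith
end

section
/- Let G : ℕ → ℂ be multiplicative and suppose that the coprime series S_G(b) converges for some b ∈ ℕ. Let c ∈ ℕ be coprime with b and such that no prime divisor of c is bad for G, i.e. every prime p ∣ c satisfies |G(p)| < 1 or |G(p)| > p. Then S_G(bc) converges and S_G(bc) = ( ∏_{p ∣ c} (1 − G(p))^{-1} ) · S_G(b). -/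
open Filter Finset

lemma mu_mul {m n : ℕ} (h : Nat.Coprime m n) : mu (m * n) = mu m * mu n := by
  unfold mu
  rw [ArithmeticFunction.isMultiplicative_moebius.map_mul_of_coprime h]
  push_cast; ring

lemma mu_prime {p : ℕ} (hp : p.Prime) : mu p = -1 := by
  unfold mu
  rw [ArithmeticFunction.moebius_apply_prime hp]; norm_num

lemma mu_eq_zero {n : ℕ} (h : ¬ Squarefree n) : mu n = 0 := by
  unfold mu
  rw [ArithmeticFunction.moebius_eq_zero_of_not_squarefree h]; norm_num

noncomputable def SSn (G : ℕ → ℂ) (a n : ℕ) : ℂ :=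
  ∑ r ∈ (Finset.Icc 1 n).filter fun r => Nat.gcd r a = 1, G r * mu r

lemma SS_eq_SSn (G : ℕ → ℂ) (a : ℕ) (x : ℝ) : SS G a x = SSn G a ⌊x⌋₊ := rfl

lemma SSn_identity (G : ℕ → ℂ) (hG : IsMult G) (a p : ℕ) (hp : p.Prime)
    (hpa : ¬ p ∣ a) (n : ℕ) :
    SSn G a n = SSn G (a * p) n - G p * SSn G (a * p) (n / p) := by
  have hp0 : 0 < p := hp.pos
  have hpa' : Nat.Coprime p a := hp.coprime_iff_not_dvd.mpr hpa
  have key : ∀ r : ℕ, Nat.gcd r (a * p) = 1 ↔ Nat.gcd r a = 1 ∧ ¬ p ∣ r := by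
    intro r
    rw [show (Nat.gcd r (a*p) = 1) = Nat.Coprime r (a*p) from rfl, Nat.coprime_mul_iff_right]
    have : r.Coprime p ↔ ¬ p ∣ r := by
      rw [Nat.coprime_comm]; exact hp.coprime_iff_not_dvd
    rw [this]
  have split : SSn G a n
      = (∑ r ∈ (Finset.Icc 1 n).filter (fun r => p ∣ r ∧ Nat.gcd r a = 1), G r * mu r)
      + SSn G (a * p) n := by
    unfold SSn
    rw [← Finset.sum_filter_add_sum_filter_not ((Finset.Icc 1 n).filter fun r => Nat.gcd r a = 1) (fun r => p ∣ r)]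
    rw [Finset.filter_filter, Finset.filter_filter]
    congr 1
    · apply Finset.sum_congr _ (fun _ _ => rfl)
      apply Finset.filter_congr; intro r _
      tauto
    · apply Finset.sum_congr _ (fun _ _ => rfl)
      apply Finset.filter_congr; intro r _
      rw [key r]
  have reindex : (∑ r ∈ (Finset.Icc 1 n).filter (fun r => p ∣ r ∧ Nat.gcd r a = 1), G r * mu r)
      = ∑ s ∈ (Finset.Icc 1 (n / p)).filter (fun s => Nat.gcd (p * s) a = 1), G (p * s) * mu (p * s) := by
    apply Finset.sum_nbij' (i := fun r => r / p) (j := fun s => p * s)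
    · intro r hr
      simp only [Finset.mem_filter, Finset.mem_Icc] at hr ⊢
      obtain ⟨⟨h1, h2⟩, ⟨s, rfl⟩, h4⟩ := hr
      rw [Nat.mul_div_cancel_left _ hp0]
      refine ⟨⟨?_, ?_⟩, h4⟩
      · rcases Nat.eq_zero_or_pos s with rfl | hs
        · simp at h1
        · exact hs
      · exact (Nat.le_div_iff_mul_le hp0).mpr (by rw [mul_comm] at h2; exact h2)
    · intro s hs
      simp only [Finset.mem_filter, Finset.mem_Icc] at hs ⊢
      obtain ⟨⟨h1, h2⟩, h3⟩ := hs
      have h2' : p * s ≤ n := by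
        have := (Nat.le_div_iff_mul_le hp0).mp h2
        rwa [mul_comm] at this
      exact ⟨⟨Nat.one_le_iff_ne_zero.mpr (by positivity), h2'⟩, ⟨s, rfl⟩, h3⟩
    · intro r hr
      simp only [Finset.mem_filter] at hr
      obtain ⟨_, ⟨s, rfl⟩, _⟩ := hr
      rw [Nat.mul_div_cancel_left _ hp0]
    · intro s hs
      rw [Nat.mul_div_cancel_left _ hp0]
    · intro r hr
      simp only [Finset.mem_filter] at hr
      obtain ⟨_, ⟨s, rfl⟩, _⟩ := hr
      rw [Nat.mul_div_cancel_left _ hp0]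
  have drop : (∑ s ∈ (Finset.Icc 1 (n / p)).filter (fun s => Nat.gcd (p * s) a = 1), G (p * s) * mu (p * s))
      = ∑ s ∈ (Finset.Icc 1 (n / p)).filter (fun s => Nat.gcd s (a * p) = 1), G (p * s) * mu (p * s) := by
    rw [← Finset.sum_filter_add_sum_filter_not ((Finset.Icc 1 (n/p)).filter fun s => Nat.gcd (p*s) a = 1) (fun s => p ∣ s)]
    have z : (∑ s ∈ ((Finset.Icc 1 (n/p)).filter fun s => Nat.gcd (p*s) a = 1).filter (fun s => p ∣ s), G (p*s) * mu (p*s)) = 0 := by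
      apply Finset.sum_eq_zero
      intro s hs
      simp only [Finset.mem_filter] at hs
      have : ¬ Squarefree (p * s) := by
        intro hsq
        have := hsq p (by
          obtain ⟨t, rfl⟩ := hs.2
          exact ⟨t, by ring⟩)
        exact hp.ne_one (Nat.isUnit_iff.mp this)
      rw [mu_eq_zero this, mul_zero]
    rw [z, zero_add, Finset.filter_filter]
    apply Finset.sum_congr _ (fun _ _ => rfl)
    apply Finset.filter_congr; intro s _
    simp only [eq_iff_iff, key s]
    rw [show (Nat.gcd (p * s) a = 1) = Nat.Coprime (p * s) a from rfl,
      Nat.coprime_mul_iff_left]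
    constructor
    · rintro ⟨⟨_, h1⟩, h2⟩; exact ⟨h1, h2⟩
    · rintro ⟨h1, h2⟩; exact ⟨⟨hpa', h1⟩, h2⟩
  have point : ∀ s ∈ (Finset.Icc 1 (n / p)).filter (fun s => Nat.gcd s (a * p) = 1),
      G (p * s) * mu (p * s) = -(G p * (G s * mu s)) := by
    intro s hs
    simp only [Finset.mem_filter, Finset.mem_Icc, key] at hs
    obtain ⟨⟨h1, _⟩, _, h3⟩ := hs
    have hcop : Nat.Coprime p s := hp.coprime_iff_not_dvd.mpr h3
    rw [hG p s hp0 h1 hcop, mu_mul hcop, mu_prime hp]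
    ring
  rw [split, reindex, drop, Finset.sum_congr rfl point]
  unfold SSn
  rw [Finset.sum_neg_distrib, ← Finset.mul_sum]
  ring


lemma bdd_of_tendsto (H : ℕ → ℂ) (L : ℂ) (h : Tendsto H atTop (nhds L)) :
    ∃ M : ℝ, 0 ≤ M ∧ ∀ n, ‖H n‖ ≤ M := by
  have h2 : Tendsto (fun n => ‖H n‖) atTop (nhds ‖L‖) := h.norm
  obtain ⟨M, hM⟩ := h2.bddAbove_range
  refine ⟨max M 0, le_max_right _ _, fun n => le_trans ?_ (le_max_left _ _)⟩
  exact hM ⟨n, rfl⟩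

lemma geom_lemma {α : ℝ} (h0 : 0 ≤ α) (h1 : α < 1) (k : ℕ) :
    ∑ j ∈ Finset.range k, α ^ j ≤ (1 - α)⁻¹ := by
  have hne : (0:ℝ) < 1 - α := by linarith
  rw [geom_sum_eq (by intro h; rw [h] at h1; linarith : α ≠ 1)]
  have heq : (α ^ k - 1) / (α - 1) = (1 - α ^ k) / (1 - α) := by
    rw [div_eq_div_iff (by linarith) (by linarith)]; ring
  rw [heq, div_le_iff₀ hne, inv_mul_cancel₀ (ne_of_gt hne)]
  have : 0 ≤ α ^ k := pow_nonneg h0 k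
  linarith

-- iteration identity
lemma iterate_g (p : ℕ) (G : ℂ) (g e : ℕ → ℂ) (hg : ∀ n, g n = e n + G * g (n / p)) :
    ∀ k n, g n = (∑ j ∈ Finset.range k, G ^ j * e (n / p ^ j)) + G ^ k * g (n / p ^ k) := by
  intro k
  induction k with
  | zero => intro n; simp
  | succ k IH =>
    intro n
    rw [Finset.sum_range_succ, IH n, hg (n / p ^ k)]
    rw [Nat.div_div_eq_div_mul, ← pow_succ]
    ring

lemma sub_case (p : ℕ) (hp : 2 ≤ p) (G L : ℂ) (hG : ‖G‖ < 1)
    (F H : ℕ → ℂ) (hrec : ∀ n, F n = H n + G * F (n / p))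
    (hH : Tendsto H atTop (nhds L)) :
    Tendsto F atTop (nhds ((1 - G)⁻¹ * L)) := by
  have hG1 : (1:ℂ) - G ≠ 0 := by
    intro h
    have hg1 : G = 1 := by linear_combination -h
    rw [hg1] at hG
    norm_num at hG
  have hα0 : (0:ℝ) ≤ ‖G‖ := norm_nonneg _
  set α := ‖G‖ with hα
  have h1α : (0:ℝ) < 1 - α := by linarith
  have hne : (1:ℝ) - α ≠ 0 := ne_of_gt h1α
  set C : ℂ := (1 - G)⁻¹ * L with hC
  have hCL' : (1 - G) * C = L := by
    rw [hC, ← mul_assoc, mul_inv_cancel₀ hG1, one_mul]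
  have hCL : L + G * C = C := by linear_combination -hCL'
  set g : ℕ → ℂ := fun n => F n - C with hgdef
  set e : ℕ → ℂ := fun n => H n - L with hedef
  have hg : ∀ n, g n = e n + G * g (n / p) := by
    intro n
    simp only [hgdef, hedef]
    rw [hrec n]
    linear_combination hCL
  have he : Tendsto e atTop (nhds 0) := by
    have := hH.sub_const L
    simpa [hedef] using this
  obtain ⟨Me, hMe0, hMe⟩ := bdd_of_tendsto e 0 (by simpa using he)
  set B : ℝ := Me * (1 - α)⁻¹ with hBdef
  have hB0 : 0 ≤ B := by positivity
  have hB : ∀ n, ‖g n‖ ≤ B := by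
    intro n
    induction n using Nat.strong_induction_on with
    | _ n IH =>
      rcases Nat.eq_zero_or_pos n with rfl | hn
      · have h0 := hg 0
        simp only [Nat.zero_div] at h0
        have h2 : g 0 - G * g 0 = e 0 := by linear_combination h0
        have h1 : ‖g 0‖ - α * ‖g 0‖ ≤ ‖e 0‖ := by
          calc ‖g 0‖ - α * ‖g 0‖ = ‖g 0‖ - ‖G * g 0‖ := by rw [norm_mul, ← hα]
            _ ≤ ‖g 0 - G * g 0‖ := norm_sub_norm_le _ _
            _ = ‖e 0‖ := by rw [h2]
        calc ‖g 0‖ ≤ Me / (1 - α) := by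
              rw [le_div_iff₀ h1α]
              nlinarith [hMe 0]
          _ = B := by rw [hBdef, div_eq_mul_inv]
      · have hlt : n / p < n := Nat.div_lt_self hn (by omega)
        have IH' := IH (n / p) hlt
        calc ‖g n‖ = ‖e n + G * g (n/p)‖ := by rw [hg n]
          _ ≤ ‖e n‖ + α * ‖g (n/p)‖ := by
              refine le_trans (norm_add_le _ _) ?_
              rw [norm_mul, ← hα]
          _ ≤ Me + α * B := by
              have := mul_le_mul_of_nonneg_left IH' hα0
              linarith [hMe n]
          _ = B := by
              rw [hBdef]
              field_simp
              ring
  have hg0 : Tendsto g atTop (nhds 0) := by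
    rw [Metric.tendsto_atTop]
    intro ε hε
    obtain ⟨k, hk⟩ : ∃ k, α ^ k * B < ε / 2 := by
      have h1 : Tendsto (fun k : ℕ => α ^ k * B) atTop (nhds (0 * B)) :=
        (tendsto_pow_atTop_nhds_zero_of_lt_one hα0 hG).mul_const B
      rw [zero_mul] at h1
      exact (h1.eventually (gt_mem_nhds (by linarith : (0:ℝ) < ε/2))).exists
    set δ : ℝ := ε / 4 * (1 - α) with hδdef
    have hδ0 : 0 < δ := by positivity
    obtain ⟨N₀, hN₀⟩ : ∃ N₀, ∀ m ≥ N₀, ‖e m‖ ≤ δ := by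
      have := (Metric.tendsto_atTop.mp he) δ hδ0
      obtain ⟨N₀, hN⟩ := this
      exact ⟨N₀, fun m hm => by
        have := hN m hm
        rw [dist_eq_norm, sub_zero] at this
        linarith⟩
    have hpk : 0 < p ^ k := pow_pos (by omega) k
    refine ⟨N₀ * p ^ k, fun n hn => ?_⟩
    rw [dist_eq_norm, sub_zero]
    have hdiv : ∀ j, j < k → N₀ ≤ n / p ^ j := by
      intro j hj
      have h1 : N₀ ≤ n / p ^ k := (Nat.le_div_iff_mul_le hpk).mpr hn
      have h2 : n / p ^ k ≤ n / p ^ j :=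
        Nat.div_le_div_left (Nat.pow_le_pow_right (by omega) (le_of_lt hj)) (pow_pos (by omega) j)
      omega
    have key := iterate_g p G g e hg k n
    have t1 : ‖∑ j ∈ Finset.range k, G ^ j * e (n / p ^ j)‖ ≤ δ * (1 - α)⁻¹ := by
      refine le_trans (norm_sum_le _ _) ?_
      have hterm : ∀ j ∈ Finset.range k, ‖G ^ j * e (n / p ^ j)‖ ≤ δ * α ^ j := by
        intro j hj
        rw [norm_mul, norm_pow, ← hα, mul_comm]
        exact mul_le_mul_of_nonneg_right (hN₀ _ (hdiv j (Finset.mem_range.mp hj))) (pow_nonneg hα0 j)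
      calc ∑ j ∈ Finset.range k, ‖G ^ j * e (n / p ^ j)‖ ≤ ∑ j ∈ Finset.range k, δ * α ^ j :=
            Finset.sum_le_sum hterm
        _ = δ * ∑ j ∈ Finset.range k, α ^ j := by rw [Finset.mul_sum]
        _ ≤ δ * (1 - α)⁻¹ := by
            apply mul_le_mul_of_nonneg_left (geom_lemma hα0 hG k) (le_of_lt hδ0)
    have t2 : ‖G ^ k * g (n / p ^ k)‖ ≤ α ^ k * B := by
      rw [norm_mul, norm_pow, ← hα]
      exact mul_le_mul_of_nonneg_left (hB _) (pow_nonneg hα0 k)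
    have tδ : δ * (1 - α)⁻¹ = ε / 4 := by
      rw [hδdef, mul_assoc, mul_inv_cancel₀ hne, mul_one]
    calc ‖g n‖ ≤ ‖∑ j ∈ Finset.range k, G ^ j * e (n / p ^ j)‖ + ‖G ^ k * g (n / p ^ k)‖ := by
          rw [key]; exact norm_add_le _ _
      _ ≤ ε / 4 + ε / 2 := by rw [← tδ]; linarith
      _ < ε := by linarith
  have hF : Tendsto (fun n => g n + C) atTop (nhds (0 + C)) := hg0.add tendsto_const_nhds
  rw [zero_add] at hF
  have : (fun n => g n + C) = F := by funext n; simp [hgdef]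
  rwa [this] at hF


lemma geom_lemma' {α : ℝ} (h0 : 0 ≤ α) (h1 : α < 1) (k : ℕ) :
    ∑ j ∈ Finset.range k, α ^ j ≤ (1 - α)⁻¹ := by
  have hne : (0:ℝ) < 1 - α := by linarith
  rw [geom_sum_eq (by intro h; rw [h] at h1; linarith : α ≠ 1)]
  have heq : (α ^ k - 1) / (α - 1) = (1 - α ^ k) / (1 - α) := by
    rw [div_eq_div_iff (by linarith) (by linarith)]; ring
  rw [heq, div_le_iff₀ hne, inv_mul_cancel₀ (ne_of_gt hne)]
  have : 0 ≤ α ^ k := pow_nonneg h0 k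
  linarith

-- assume earlier lemmas; test super_case standalone with sorried deps
lemma iterate_up (p : ℕ) (hp : 0 < p) (G : ℂ) (hG0 : G ≠ 0) (g e : ℕ → ℂ)
    (hg : ∀ n, g n = e n + G * g (n / p)) :
    ∀ k n, (G⁻¹) ^ k * g (p ^ k * n) = g n + ∑ j ∈ Finset.range k, (G⁻¹) ^ (j+1) * e (p ^ (j+1) * n) := by
  have hup : ∀ n, g (p * n) = e (p * n) + G * g n := by
    intro n
    have := hg (p * n)
    rwa [Nat.mul_div_cancel_left n hp] at this
  intro k
  induction k with
  | zero => intro n; simp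
  | succ k IH =>
    intro n
    have h1 : p ^ (k+1) * n = p * (p ^ k * n) := by ring
    rw [h1, hup (p ^ k * n), Finset.sum_range_succ, ← h1]
    have h3 : (G⁻¹) ^ (k+1) * G = (G⁻¹) ^ k := by
      rw [pow_succ]
      field_simp
    linear_combination IH n + g (p ^ k * n) * h3

lemma bdd_of_tendsto' (H : ℕ → ℂ) (L : ℂ) (h : Tendsto H atTop (nhds L)) :
    ∃ M : ℝ, 0 ≤ M ∧ ∀ n, ‖H n‖ ≤ M := by
  have h2 : Tendsto (fun n => ‖H n‖) atTop (nhds ‖L‖) := h.norm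
  obtain ⟨M, hM⟩ := h2.bddAbove_range
  exact ⟨max M 0, le_max_right _ _, fun n => le_trans (hM ⟨n, rfl⟩) (le_max_left _ _)⟩

set_option maxHeartbeats 2000000 in
lemma super_case (p : ℕ) (hp : 2 ≤ p) (G L : ℂ) (hG : (p:ℝ) < ‖G‖)
    (F H : ℕ → ℂ) (hrec : ∀ n, F n = H n + G * F (n / p))
    (A : ℝ) (hjump : ∀ m n : ℕ, m ≤ n → ‖F n - F m‖ ≤ A * ((n:ℝ) - m))
    (hH : Tendsto H atTop (nhds L)) :
    Tendsto F atTop (nhds ((1 - G)⁻¹ * L)) := by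
  have hp0 : 0 < p := by omega
  have hp2 : (2:ℝ) ≤ p := by exact_mod_cast hp
  have hGbig : (2:ℝ) < ‖G‖ := by linarith
  have hGpos : (0:ℝ) < ‖G‖ := by linarith
  have hG0 : G ≠ 0 := by
    intro h; rw [h] at hGbig; simp at hGbig; linarith
  have hG1 : (1:ℂ) - G ≠ 0 := by
    intro h
    have hg1 : G = 1 := by linear_combination -h
    rw [hg1] at hGbig; norm_num at hGbig
  set β : ℝ := ‖G‖⁻¹ with hβdef
  have hβ0 : 0 < β := by positivity
  have hβhalf : β ≤ 1/2 := by
    rw [hβdef]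
    rw [inv_le_comm₀ hGpos (by norm_num)]
    linarith
  have hβ1 : β < 1 := by linarith
  have hβG : ‖G⁻¹‖ = β := by rw [norm_inv, hβdef]
  have hpβ : (p:ℝ) * β < 1 := by
    rw [hβdef, mul_inv_lt_iff₀ hGpos, one_mul]
    exact hG
  have hβfrac : β * (1 - β)⁻¹ ≤ 1 := by
    rw [mul_inv_le_iff₀ (by linarith), one_mul]
    linarith
  set C : ℂ := (1 - G)⁻¹ * L with hC
  have hCL' : (1 - G) * C = L := by
    rw [hC, ← mul_assoc, mul_inv_cancel₀ hG1, one_mul]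
  have hCL : L + G * C = C := by linear_combination -hCL'
  set g : ℕ → ℂ := fun n => F n - C with hgdef
  set e : ℕ → ℂ := fun n => H n - L with hedef
  have hg : ∀ n, g n = e n + G * g (n / p) := by
    intro n
    simp only [hgdef, hedef]
    rw [hrec n]
    linear_combination hCL
  have he : Tendsto e atTop (nhds 0) := by
    have := hH.sub_const L
    simpa [hedef] using this
  obtain ⟨Me, hMe0, hMe⟩ := bdd_of_tendsto' e 0 (by simpa using he)
  -- summability
  have hnormterm : ∀ n j : ℕ, ‖(G⁻¹) ^ (j+1) * e (p ^ (j+1) * n)‖ ≤ Me * β ^ (j+1) := by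
    intro n j
    rw [norm_mul, norm_pow, hβG]
    calc β ^ (j+1) * ‖e (p ^ (j+1) * n)‖ ≤ β ^ (j+1) * Me :=
          mul_le_mul_of_nonneg_left (hMe _) (pow_nonneg (le_of_lt hβ0) _)
      _ = Me * β ^ (j+1) := mul_comm _ _
  have hgeo : ∀ (c : ℝ) (m : ℕ), Summable (fun j : ℕ => c * β ^ (j + m)) := by
    intro c m
    have heq : (fun j : ℕ => c * β ^ (j + m)) = fun j : ℕ => (c * β ^ m) * β ^ j := by
      funext j; rw [pow_add]; ring
    rw [heq]
    exact (summable_geometric_of_lt_one (le_of_lt hβ0) hβ1).mul_left _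
  have hsummable : ∀ n, Summable (fun j : ℕ => (G⁻¹) ^ (j+1) * e (p ^ (j+1) * n)) := by
    intro n
    exact Summable.of_norm_bounded (g := fun j => Me * β ^ (j+1)) (hgeo Me 1) (hnormterm n)
  set Φ : ℕ → ℂ := fun n => g n + ∑' j : ℕ, (G⁻¹) ^ (j+1) * e (p ^ (j+1) * n) with hΦdef
  have htail0 : ∀ n k : ℕ, ‖∑' j : ℕ, (G⁻¹) ^ (j+k+1) * e (p ^ (j+k+1) * n)‖ ≤ Me * β ^ k := by
    intro n k
    have hsum2 : Summable (fun j : ℕ => (G⁻¹) ^ (j+k+1) * e (p ^ (j+k+1) * n)) :=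
      (summable_nat_add_iff k).mpr (hsummable n)
    calc ‖∑' j : ℕ, (G⁻¹) ^ (j+k+1) * e (p ^ (j+k+1) * n)‖
        ≤ ∑' j : ℕ, ‖(G⁻¹) ^ (j+k+1) * e (p ^ (j+k+1) * n)‖ := norm_tsum_le_tsum_norm (hsum2.norm)
      _ ≤ ∑' j : ℕ, Me * β ^ (j+k+1) := by
          exact Summable.tsum_le_tsum (fun j => hnormterm n (j+k)) hsum2.norm (hgeo Me (k+1))
      _ = Me * β ^ (k+1) * (1 - β)⁻¹ := by
          have heq2 : (fun j : ℕ => Me * β ^ (j+k+1)) = fun j : ℕ => (Me * β ^ (k+1)) * β ^ j := by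
            funext j
            rw [show j + k + 1 = (k+1) + j by omega, pow_add]
            ring
          rw [heq2, tsum_mul_left, tsum_geometric_of_lt_one (le_of_lt hβ0) hβ1]
      _ ≤ Me * β ^ k := by
          have : β ^ (k+1) = β ^ k * β := pow_succ _ _
          rw [this]
          calc Me * (β ^ k * β) * (1-β)⁻¹ = Me * β ^ k * (β * (1-β)⁻¹) := by ring
            _ ≤ Me * β ^ k * 1 := by
                apply mul_le_mul_of_nonneg_left hβfrac
                positivity
            _ = Me * β ^ k := mul_one _
  have htail : ∀ n k : ℕ, ‖Φ n - (G⁻¹) ^ k * g (p ^ k * n)‖ ≤ Me * β ^ k := by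
    intro n k
    have hsplit := Summable.sum_add_tsum_nat_add (f := fun j : ℕ => (G⁻¹) ^ (j+1) * e (p ^ (j+1) * n)) k (hsummable n)
    have hiter := iterate_up p hp0 G hG0 g e hg k n
    have heq : Φ n - (G⁻¹) ^ k * g (p ^ k * n) = ∑' j : ℕ, (G⁻¹) ^ (j+k+1) * e (p ^ (j+k+1) * n) := by
      rw [hΦdef]
      simp only
      rw [← hsplit, hiter]
      ring
    rw [heq]
    exact htail0 n k
  -- Φ is constant
  have hconst : ∀ n, Φ n = Φ 0 := by
    intro n
    have hbound : ∀ k : ℕ, ‖Φ n - Φ 0‖ ≤ |A| * n * ((p:ℝ)*β) ^ k + 2 * (Me * β ^ k) := by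
      intro k
      have h1 := htail n k
      have h2 := htail 0 k
      have hgF : g (p ^ k * n) - g (p ^ k * 0) = F (p ^ k * n) - F (p ^ k * 0) := by
        simp only [hgdef]; ring
      have h3 : ‖(G⁻¹) ^ k * g (p ^ k * n) - (G⁻¹) ^ k * g (p ^ k * 0)‖ ≤ |A| * n * ((p:ℝ)*β) ^ k := by
        rw [← mul_sub, norm_mul, norm_pow, hβG, hgF]
        have hle : p ^ k * 0 ≤ p ^ k * n := by simp
        have hj := hjump (p ^ k * 0) (p ^ k * n) hle
        have hcast : ((p ^ k * n : ℕ) : ℝ) - ((p ^ k * 0 : ℕ) : ℝ) = (p:ℝ)^k * n := by push_cast; ring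
        rw [hcast] at hj
        calc β ^ k * ‖F (p ^ k * n) - F (p ^ k * 0)‖ ≤ β ^ k * (A * ((p:ℝ)^k * n)) :=
              mul_le_mul_of_nonneg_left hj (pow_nonneg hβ0.le k)
          _ ≤ β ^ k * (|A| * ((p:ℝ)^k * n)) := by
              have habs : A ≤ |A| := le_abs_self A
              have h0 : (0:ℝ) ≤ (p:ℝ)^k * n := by positivity
              have h1 := mul_le_mul_of_nonneg_right habs h0
              nlinarith [pow_nonneg hβ0.le k]
          _ = |A| * n * ((p:ℝ)*β) ^ k := by rw [mul_pow]; ring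
      calc ‖Φ n - Φ 0‖ = ‖(Φ n - (G⁻¹) ^ k * g (p ^ k * n)) + ((G⁻¹) ^ k * g (p ^ k * n) - (G⁻¹) ^ k * g (p ^ k * 0)) - (Φ 0 - (G⁻¹) ^ k * g (p ^ k * 0))‖ := by
            congr 1; ring
        _ ≤ ‖(Φ n - (G⁻¹) ^ k * g (p ^ k * n)) + ((G⁻¹) ^ k * g (p ^ k * n) - (G⁻¹) ^ k * g (p ^ k * 0))‖ + ‖Φ 0 - (G⁻¹) ^ k * g (p ^ k * 0)‖ := norm_sub_le _ _
        _ ≤ ‖Φ n - (G⁻¹) ^ k * g (p ^ k * n)‖ + ‖(G⁻¹) ^ k * g (p ^ k * n) - (G⁻¹) ^ k * g (p ^ k * 0)‖ + ‖Φ 0 - (G⁻¹) ^ k * g (p ^ k * 0)‖ := by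
            have := norm_add_le (Φ n - (G⁻¹) ^ k * g (p ^ k * n)) ((G⁻¹) ^ k * g (p ^ k * n) - (G⁻¹) ^ k * g (p ^ k * 0))
            linarith
        _ ≤ Me * β ^ k + |A| * n * ((p:ℝ)*β) ^ k + Me * β ^ k := by linarith
        _ = |A| * n * ((p:ℝ)*β) ^ k + 2 * (Me * β ^ k) := by ring
    have hrhs : Tendsto (fun k : ℕ => |A| * n * ((p:ℝ)*β) ^ k + 2 * (Me * β ^ k)) atTop (nhds 0) := by
      have t1 : Tendsto (fun k : ℕ => ((p:ℝ)*β) ^ k) atTop (nhds 0) :=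
        tendsto_pow_atTop_nhds_zero_of_lt_one (by positivity) hpβ
      have t2 : Tendsto (fun k : ℕ => β ^ k) atTop (nhds 0) :=
        tendsto_pow_atTop_nhds_zero_of_lt_one (le_of_lt hβ0) hβ1
      have := (t1.const_mul (|A| * n)).add ((t2.const_mul Me).const_mul 2)
      simpa [mul_assoc] using this
    have : ‖Φ n - Φ 0‖ ≤ 0 := ge_of_tendsto' hrhs hbound
    have : Φ n - Φ 0 = 0 := by
      have h0 := norm_nonneg (Φ n - Φ 0)
      rw [← norm_le_zero_iff]
      linarith
    linear_combination this
  -- multiplicative relation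
  have hmul : ∀ n, Φ (p * n) = G * Φ n := by
    intro n
    have h1 : g (p * n) = e (p * n) + G * g n := by
      have := hg (p * n)
      rwa [Nat.mul_div_cancel_left n hp0] at this
    have e1 : (fun j : ℕ => (G⁻¹) ^ (j+1) * e (p ^ (j+1) * (p * n)))
        = fun j : ℕ => (G⁻¹) ^ (j+1) * e (p ^ (j+1+1) * n) := by
      funext j; congr 2; ring
    have hsplit0 := Summable.tsum_eq_zero_add (hsummable n)
    rw [hΦdef]
    simp only
    rw [h1, e1, hsplit0, mul_add, mul_add, ← tsum_mul_left]
    have hGG : ∀ m : ℕ, G * (G⁻¹) ^ (m+1) = (G⁻¹) ^ m := by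
      intro m; rw [pow_succ, ← mul_assoc, mul_comm G ((G⁻¹) ^ m), mul_assoc,
        mul_inv_cancel₀ hG0, mul_one]
    have e2 : ∀ j : ℕ, G * ((G⁻¹) ^ (j+1+1) * e (p ^ (j+1+1) * n))
        = (G⁻¹) ^ (j+1) * e (p ^ (j+1+1) * n) := by
      intro j
      rw [← mul_assoc, hGG]
    rw [tsum_congr e2]
    have e3 : G * ((G⁻¹) ^ (0+1) * e (p ^ (0+1) * n)) = e (p * n) := by
      rw [← mul_assoc, hGG 0, pow_zero, one_mul]
      norm_num
    rw [e3]
    ring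
  -- Φ vanishes
  have hΦ0 : ∀ n, Φ n = 0 := by
    have h1 : Φ (p * 1) = G * Φ 1 := hmul 1
    rw [hconst (p*1), hconst 1] at h1
    have h2 : (1 - G) * Φ 0 = 0 := by linear_combination h1
    have h3 : Φ 0 = 0 := by
      rcases mul_eq_zero.mp h2 with h | h
      · exact absurd h hG1
      · exact h
    intro n; rw [hconst n, h3]
  have hgeq : ∀ n, g n = -∑' j : ℕ, (G⁻¹) ^ (j+1) * e (p ^ (j+1) * n) := by
    intro n
    have h0 := hΦ0 n
    rw [hΦdef] at h0
    simp only at h0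
    linear_combination h0
  -- g tends to 0
  have hg0 : Tendsto g atTop (nhds 0) := by
    rw [Metric.tendsto_atTop]
    intro ε hε
    obtain ⟨k, hk⟩ : ∃ k, Me * β ^ k < ε / 2 := by
      have h1 : Tendsto (fun k : ℕ => Me * β ^ k) atTop (nhds (Me * 0)) :=
        (tendsto_pow_atTop_nhds_zero_of_lt_one (le_of_lt hβ0) hβ1).const_mul Me
      rw [mul_zero] at h1
      exact (h1.eventually (gt_mem_nhds (by linarith : (0:ℝ) < ε/2))).exists
    set δ : ℝ := ε / 4 with hδdef
    have hδ0 : 0 < δ := by positivity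
    obtain ⟨N₀, hN₀⟩ : ∃ N₀, ∀ m ≥ N₀, ‖e m‖ ≤ δ := by
      obtain ⟨N₀, hN⟩ := (Metric.tendsto_atTop.mp he) δ hδ0
      exact ⟨N₀, fun m hm => by
        have := hN m hm
        rw [dist_eq_norm, sub_zero] at this
        linarith⟩
    refine ⟨N₀, fun n hn => ?_⟩
    rw [dist_eq_norm, sub_zero, hgeq n, norm_neg]
    have hsplitk := Summable.sum_add_tsum_nat_add (f := fun j : ℕ => (G⁻¹) ^ (j+1) * e (p ^ (j+1) * n)) k (hsummable n)
    have hhead : ‖∑ j ∈ Finset.range k, (G⁻¹) ^ (j+1) * e (p ^ (j+1) * n)‖ ≤ δ := by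
      refine le_trans (norm_sum_le _ _) ?_
      have hterm : ∀ j ∈ Finset.range k, ‖(G⁻¹) ^ (j+1) * e (p ^ (j+1) * n)‖ ≤ δ * β ^ (j+1) := by
        intro j _
        rw [norm_mul, norm_pow, hβG, mul_comm]
        apply mul_le_mul_of_nonneg_right _ (pow_nonneg (le_of_lt hβ0) _)
        apply hN₀
        calc N₀ ≤ n := hn
          _ ≤ p ^ (j+1) * n := Nat.le_mul_of_pos_left n (pow_pos hp0 _)
      calc ∑ j ∈ Finset.range k, ‖(G⁻¹) ^ (j+1) * e (p ^ (j+1) * n)‖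
          ≤ ∑ j ∈ Finset.range k, δ * β ^ (j+1) := Finset.sum_le_sum hterm
        _ = δ * β * ∑ j ∈ Finset.range k, β ^ j := by
            rw [Finset.mul_sum]
            apply Finset.sum_congr rfl
            intro j _
            rw [pow_succ]
            ring
        _ ≤ δ * β * (1 - β)⁻¹ := by
            apply mul_le_mul_of_nonneg_left (geom_lemma' (le_of_lt hβ0) hβ1 k) (by positivity)
        _ = δ * (β * (1 - β)⁻¹) := by ring
        _ ≤ δ * 1 := mul_le_mul_of_nonneg_left hβfrac (le_of_lt hδ0)
        _ = δ := mul_one _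
    have htailk : ‖∑' j : ℕ, (G⁻¹) ^ (j+k+1) * e (p ^ (j+k+1) * n)‖ ≤ Me * β ^ k := htail0 n k
    calc ‖∑' j : ℕ, (G⁻¹) ^ (j+1) * e (p ^ (j+1) * n)‖
        = ‖(∑ j ∈ Finset.range k, (G⁻¹) ^ (j+1) * e (p ^ (j+1) * n))
          + ∑' j : ℕ, (G⁻¹) ^ (j+k+1) * e (p ^ (j+k+1) * n)‖ := by rw [hsplitk]
      _ ≤ ‖∑ j ∈ Finset.range k, (G⁻¹) ^ (j+1) * e (p ^ (j+1) * n)‖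
          + ‖∑' j : ℕ, (G⁻¹) ^ (j+k+1) * e (p ^ (j+k+1) * n)‖ := norm_add_le _ _
      _ ≤ δ + Me * β ^ k := by linarith
      _ < ε := by rw [hδdef]; linarith
  have hF : Tendsto (fun n => g n + C) atTop (nhds (0 + C)) := hg0.add tendsto_const_nhds
  rw [zero_add] at hF
  have hFg : (fun n => g n + C) = F := by funext n; simp [hgdef]
  rwa [hFg] at hF



lemma SSn_succ (G : ℕ → ℂ) (a n : ℕ) :
    SSn G a (n+1) = SSn G a n + (if Nat.gcd (n+1) a = 1 then G (n+1) * mu (n+1) else 0) := by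
  unfold SSn
  have h1 : Finset.Icc 1 (n+1) = insert (n+1) (Finset.Icc 1 n) := by
    ext r
    simp only [Finset.mem_Icc, Finset.mem_insert]
    omega
  rw [h1, Finset.filter_insert]
  split
  · rw [Finset.sum_insert (by simp)]
    ring
  · ring

lemma STendsto_iff_nat (G : ℕ → ℂ) (a : ℕ) (L : ℂ) :
    STendsto G a L ↔ Tendsto (fun n : ℕ => SSn G a n) atTop (nhds L) := by
  constructor
  · intro h
    have := h.comp (tendsto_natCast_atTop_atTop (R := ℝ))
    convert this using 2 with n
    simp only [Function.comp_apply, SS, SSn, Nat.floor_natCast]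
  · intro h
    have := h.comp (tendsto_nat_floor_atTop (α := ℝ))
    exact this



lemma jump_bound (G : ℕ → ℂ) (a p : ℕ) (MH : ℝ) (hMH : ∀ n, ‖SSn G a n‖ ≤ MH) :
    ∀ m n : ℕ, m ≤ n → ‖SSn G (a*p) n - SSn G (a*p) m‖ ≤ (2*MH) * ((n:ℝ) - m) := by
  have hMH0 : 0 ≤ MH := le_trans (norm_nonneg _) (hMH 0)
  intro m n hmn
  induction n, hmn using Nat.le_induction with
  | base => simp
  | succ n hmn IH =>
    have hstep : ‖SSn G (a*p) (n+1) - SSn G (a*p) n‖ ≤ 2 * MH := by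
      rw [SSn_succ]
      split
      case isTrue h =>
        have ha : Nat.gcd (n+1) a = 1 := Nat.Coprime.coprime_dvd_right ⟨p, rfl⟩ h
        have h2 := SSn_succ G a n
        rw [if_pos ha] at h2
        have h3 : G (n+1) * mu (n+1) = SSn G a (n+1) - SSn G a n := by linear_combination -h2
        rw [add_sub_cancel_left, h3]
        exact le_trans (norm_sub_le _ _) (by linarith [hMH (n+1), hMH n])
      case isFalse h =>
        rw [add_zero, sub_self, norm_zero]
        linarith
    have hid : (2*MH) * (((n:ℝ)+1) - m) = (2*MH)*((n:ℝ)-m) + 2*MH := by ring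
    calc ‖SSn G (a*p) (n+1) - SSn G (a*p) m‖
        = ‖(SSn G (a*p) (n+1) - SSn G (a*p) n) + (SSn G (a*p) n - SSn G (a*p) m)‖ := by
          congr 1; ring
      _ ≤ ‖SSn G (a*p) (n+1) - SSn G (a*p) n‖ + ‖SSn G (a*p) n - SSn G (a*p) m‖ := norm_add_le _ _
      _ ≤ 2*MH + (2*MH) * ((n:ℝ) - m) := by linarith
      _ = (2*MH) * ((((n+1):ℕ):ℝ) - m) := by push_cast; ring

lemma STendsto_step (G : ℕ → ℂ) (hG : IsMult G) (a p : ℕ) (hp : p.Prime) (hpa : ¬ p ∣ a)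
    (L : ℂ) (hL : STendsto G a L)
    (hgood : ‖G p‖ < 1 ∨ (p:ℝ) < ‖G p‖) :
    STendsto G (a * p) ((1 - G p)⁻¹ * L) := by
  have hp2 : 2 ≤ p := hp.two_le
  have hH : Tendsto (fun n => SSn G a n) atTop (nhds L) := (STendsto_iff_nat G a L).mp hL
  have hrec : ∀ n, SSn G (a*p) n = SSn G a n + G p * SSn G (a*p) (n / p) := by
    intro n
    have h1 := SSn_identity G hG a p hp hpa n
    linear_combination -h1
  rw [STendsto_iff_nat]
  have habs : ∀ z : ℂ, ‖z‖ = ‖z‖ := fun z => rfl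
  rcases hgood with h | h
  · exact sub_case p hp2 (G p) L (by rw [← habs]; exact h) _ _ hrec hH
  · obtain ⟨MH, hMH0, hMH⟩ := bdd_of_tendsto _ L hH
    exact super_case p hp2 (G p) L (by rw [← habs]; exact h) _ _ hrec (2*MH)
      (jump_bound G a p MH hMH) hH

lemma SSn_congr (G : ℕ → ℂ) {a b : ℕ} (h : ∀ r, Nat.gcd r a = 1 ↔ Nat.gcd r b = 1) (n : ℕ) :
    SSn G a n = SSn G b n := by
  unfold SSn
  congr 1
  apply Finset.filter_congr
  intro r _
  simpa using h r

lemma main_aux (G : ℕ → ℂ) (hG : IsMult G) :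
    ∀ c : ℕ, 0 < c → ∀ b : ℕ, 0 < b → Nat.Coprime b c → ∀ L : ℂ, STendsto G b L →
    (∀ p : ℕ, p.Prime → p ∣ c → ‖G p‖ < 1 ∨ (p : ℝ) < ‖G p‖) →
    STendsto G (b * c) ((∏ p ∈ c.primeFactors, (1 - G p)⁻¹) * L) := by
  intro c
  induction c using Nat.strong_induction_on with
  | _ c IH =>
    intro hc b hb hbc L hSb hgood
    rcases eq_or_ne c 1 with rfl | hc1
    · simpa using hSb
    · set p := c.minFac with hpdef
      have hpp : p.Prime := Nat.minFac_prime hc1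
      have hpc : p ∣ c := Nat.minFac_dvd c
      set k := c.factorization p with hk
      set m := c / p ^ k with hm
      have hc0 : c ≠ 0 := by omega
      have hkpos : 0 < k := hpp.factorization_pos_of_dvd hc0 hpc
      have hcm : p ^ k * m = c := Nat.ordProj_mul_ordCompl_eq_self c p
      have hpm : ¬ p ∣ m := Nat.not_dvd_ordCompl hpp hc0
      have hm0 : 0 < m := Nat.ordCompl_pos p hc0
      have hmdvd : m ∣ c := Nat.ordCompl_dvd c p
      have hmc : m < c := by
        have hle : m ≤ c := Nat.le_of_dvd hc hmdvd
        rcases eq_or_lt_of_le hle with heq | hlt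
        · exact absurd (heq ▸ hpc) hpm
        · exact hlt
      have hbm : Nat.Coprime b m := Nat.Coprime.coprime_dvd_right hmdvd hbc
      have IH1 := IH m hmc hm0 b hb hbm L hSb
        (fun q hq hqm => hgood q hq (hqm.trans hmdvd))
      have hpbm : ¬ p ∣ b * m := by
        intro hd
        rcases (Nat.Prime.dvd_mul hpp).mp hd with hdb | hdm
        · have h1 : p ∣ Nat.gcd b c := Nat.dvd_gcd hdb hpc
          rw [hbc] at h1
          exact hpp.ne_one (Nat.dvd_one.mp h1)
        · exact hpm hdm
      have step := STendsto_step G hG (b*m) p hpp hpbm _ IH1 (hgood p hpp hpc)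
      have hiff : ∀ r, Nat.gcd r (b*m*p) = 1 ↔ Nat.gcd r (b*c) = 1 := by
        intro r
        show Nat.Coprime r (b*m*p) ↔ Nat.Coprime r (b*c)
        rw [Nat.coprime_mul_iff_right, Nat.coprime_mul_iff_right,
          Nat.coprime_mul_iff_right, ← hcm, Nat.coprime_mul_iff_right,
          Nat.coprime_pow_right_iff hkpos]
        tauto
      have hprod : (∏ q ∈ c.primeFactors, (1 - G q)⁻¹)
          = (1 - G p)⁻¹ * ∏ q ∈ m.primeFactors, (1 - G q)⁻¹ := by
        have h1 : c.primeFactors = insert p m.primeFactors := by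
          rw [← hcm, Nat.primeFactors_mul (pow_ne_zero _ hpp.pos.ne') (by omega),
            Nat.primeFactors_prime_pow hkpos.ne' hpp, ← Finset.insert_eq]
        rw [h1, Finset.prod_insert (fun hmem => hpm (Nat.dvd_of_mem_primeFactors hmem))]
      have heq : (fun x : ℝ => SS G (b*c) x) = fun x : ℝ => SS G (b*m*p) x := by
        funext x
        rw [SS_eq_SSn, SS_eq_SSn]
        exact SSn_congr G (fun r => (hiff r).symm) _
      have hassoc : ((1 - G p)⁻¹ * ∏ q ∈ m.primeFactors, (1 - G q)⁻¹) * L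
          = (1 - G p)⁻¹ * ((∏ q ∈ m.primeFactors, (1 - G q)⁻¹) * L) := by ring
      unfold STendsto at step ⊢
      rw [hprod, heq, hassoc]
      exact step

/-- Converse `S_G`-recursive formula (Corollary 6.2). -/
theorem stmt_19 (G : ℕ → ℂ) (hG : IsMult G) (b c : ℕ) (hb : 0 < b) (hc : 0 < c)
    (hbc : Nat.Coprime b c) (L : ℂ) (hSb : STendsto G b L)
    (hgood : ∀ p : ℕ, p.Prime → p ∣ c →
      ‖G p‖ < 1 ∨ (p : ℝ) < ‖G p‖) :
    STendsto G (b * c) ((∏ p ∈ c.primeFactors, (1 - G p)⁻¹) * L) :=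
  main_aux G hG c hc b hb hbc L hSb hgood
end
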